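/- arXiv:2207.06891 — 9 statements merged into one kernel-verified Lean document; each statement's English description precedes it below -/
import Mathlib

section
/- For every integer d ≥ 2, the complex D_d admits no weak Hamiltonian cycle; that is, for every bijection f : ZMod (2d+2) → {0, 1, ..., 2d+1} there exists a vertex w such that w belongs to no window W_i(f) that is a facet of D_d. -/
/-- The `i`-th window of a cyclic arrangement `f : ZMod n → V` in a pure `d`-complex:
the set `{f i, f (i+1), ..., f (i+d)}`. -/
def cycWindow {V : Type*} [DecidableEq V] {n : ℕ} (d : ℕ) (f : ZMod n → V) (i : ZMod n) :
    Finset V :=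
  (Finset.range (d + 1)).image (fun (j : ℕ) => f (i + (j : ZMod n)))

/-- A facet of the complex `D_d` on vertex set `ZMod (2d+2)` (standing for `{0,...,2d+1}`):
a `(d+1)`-element subset containing the vertex `0`. -/
def isFacetD (d : ℕ) (F : Finset (ZMod (2 * d + 2))) : Prop :=
  F.card = d + 1 ∧ (0 : ZMod (2 * d + 2)) ∈ F

/-- For every `d ≥ 2`, the complex `D_d` admits no weak Hamiltonian cycle: for every
bijection `f : ZMod (2d+2) → {0,...,2d+1}` there is a vertex `w` belonging to no window
`W_i(f)` that is a facet of `D_d`. -/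
theorem Dd_no_weak_hamiltonian_cycle (d : ℕ) (hd : 2 ≤ d)
    (f : ZMod (2 * d + 2) → ZMod (2 * d + 2)) (hf : Function.Bijective f) :
    ∃ w : ZMod (2 * d + 2), ∀ i : ZMod (2 * d + 2),
      isFacetD d (cycWindow d f i) → w ∉ cycWindow d f i := by
  haveI : NeZero (2 * d + 2) := ⟨by omega⟩
  obtain ⟨k, hk⟩ := hf.surjective 0
  refine ⟨f (k + ((d + 1 : ℕ) : ZMod (2 * d + 2))), ?_⟩
  rintro i ⟨-, h0⟩ hw
  simp only [cycWindow, Finset.mem_image, Finset.mem_range] at h0 hw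
  obtain ⟨j, hj, hj0⟩ := h0
  obtain ⟨j', hj', hjw⟩ := hw
  have e1 : i + (j : ZMod (2 * d + 2)) = k := hf.injective (by rw [hj0, hk])
  have e2 : i + (j' : ZMod (2 * d + 2)) = k + ((d + 1 : ℕ) : ZMod (2 * d + 2)) :=
    hf.injective hjw
  have e3 : (j' : ZMod (2 * d + 2)) = ((j + d + 1 : ℕ) : ZMod (2 * d + 2)) := by
    have h := e2
    rw [← e1, add_assoc] at h
    have := add_left_cancel h
    rw [this]; push_cast; ring
  have h1 : j' < 2 * d + 2 := by omega
  have h2 : j + d + 1 < 2 * d + 2 := by omega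
  have := congrArg ZMod.val e3
  rw [ZMod.val_cast_of_lt h1, ZMod.val_cast_of_lt h2] at this
  omega
end

section
/- For every integer d ≥ 2, the complex D_d admits no weak Hamiltonian path; that is, for every bijection g : Fin (2d+2) → {0, 1, ..., 2d+1} there exists a vertex w that belongs to no window {g(i), g(i+1), ..., g(i+d)} (with i + d ≤ 2d+1) that is a facet of D_d. -/
/-- The window `{g i, g (i+1), ..., g (i+d)}` of a linear arrangement `g : Fin n → V`,
starting at position `i : ℕ`. -/
def pathWindow {V : Type*} [DecidableEq V] {n : ℕ} (d : ℕ) (g : Fin n → V) (i : ℕ) :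
    Finset V :=
  (Finset.univ.filter (fun k : Fin n => i ≤ (k : ℕ) ∧ (k : ℕ) ≤ i + d)).image g

/-- For every `d ≥ 2`, the complex `D_d` admits no weak Hamiltonian path: for every
bijection `g : Fin (2d+2) → {0,...,2d+1}` there is a vertex `w` belonging to no window
`{g i, ..., g (i+d)}` (with `i + d ≤ 2d+1`) that is a facet of `D_d`. -/
theorem Dd_no_weak_hamiltonian_path (d : ℕ) (hd : 2 ≤ d)
    (g : Fin (2 * d + 2) → ZMod (2 * d + 2)) (hg : Function.Bijective g) :
    ∃ w : ZMod (2 * d + 2), ∀ i : ℕ, i + d ≤ 2 * d + 1 →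
      isFacetD d (pathWindow d g i) → w ∉ pathWindow d g i := by
  obtain ⟨p, hp⟩ := hg.surjective 0
  have hplt : (p : ℕ) < 2 * d + 2 := p.isLt
  by_cases hpd : (p : ℕ) ≤ d
  · -- uncovered vertex: position p + d + 1
    refine ⟨g ⟨(p : ℕ) + d + 1, by omega⟩, fun i hi hF hw => ?_⟩
    obtain ⟨k, hk, hgk⟩ := Finset.mem_image.mp hw
    simp only [Finset.mem_filter, Finset.mem_univ, true_and] at hk
    have hkq : k = ⟨(p : ℕ) + d + 1, by omega⟩ := hg.injective hgk
    obtain ⟨k', hk', hgk'⟩ := Finset.mem_image.mp hF.2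
    simp only [Finset.mem_filter, Finset.mem_univ, true_and] at hk'
    have hk'p : k' = p := hg.injective (hgk'.trans hp.symm)
    have h1 : (k : ℕ) = (p : ℕ) + d + 1 := congrArg Fin.val hkq
    have h2 : (k' : ℕ) = (p : ℕ) := congrArg Fin.val hk'p
    omega
  · -- uncovered vertex: position p - (d + 1)
    refine ⟨g ⟨(p : ℕ) - (d + 1), by omega⟩, fun i hi hF hw => ?_⟩
    obtain ⟨k, hk, hgk⟩ := Finset.mem_image.mp hw
    simp only [Finset.mem_filter, Finset.mem_univ, true_and] at hk
    have hkq : k = ⟨(p : ℕ) - (d + 1), by omega⟩ := hg.injective hgk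
    obtain ⟨k', hk', hgk'⟩ := Finset.mem_image.mp hF.2
    simp only [Finset.mem_filter, Finset.mem_univ, true_and] at hk'
    have hk'p : k' = p := hg.injective (hgk'.trans hp.symm)
    have h1 : (k : ℕ) = (p : ℕ) - (d + 1) := congrArg Fin.val hkq
    have h2 : (k' : ℕ) = (p : ℕ) := congrArg Fin.val hk'p
    omega
end

section
/- For every integer d ≥ 2, the complex W^d admits no weak Hamiltonian path; that is, for every bijection g : Fin (d+3) → {1, ..., d+3} there exists a vertex w that belongs to no window {g(i), g(i+1), ..., g(i+d)} (with i + d ≤ d+2) that is a facet of W^d. -/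
/-- A facet of the complex `W^d` on vertex set `{1,...,d+3} ⊆ ℕ`: one of the three sets
`{1,...,d} ∪ {d+1}`, `{1,...,d} ∪ {d+2}`, `{1,...,d} ∪ {d+3}`. -/
def isFacetW (d : ℕ) (F : Finset ℕ) : Prop :=
  F = insert (d + 1) (Finset.Icc 1 d) ∨ F = insert (d + 2) (Finset.Icc 1 d) ∨
    F = insert (d + 3) (Finset.Icc 1 d)

lemma exists_third (a b : ℕ) : ∃ c, (c = 1 ∨ c = 2 ∨ c = 3) ∧ c ≠ a ∧ c ≠ b := by
  by_cases h1 : a = 1 ∨ b = 1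
  · by_cases h2 : a = 2 ∨ b = 2
    · exact ⟨3, by omega⟩
    · exact ⟨2, by omega⟩
  · exact ⟨1, by omega⟩

lemma not_facet_02 (d : ℕ) (hd : 2 ≤ d) (g : Fin (d + 3) → ℕ)
    (hinj : Function.Injective g) (h0 : isFacetW d (pathWindow d g 0))
    (h2 : isFacetW d (pathWindow d g 2)) : False := by
  set S : Finset (Fin (d + 3)) :=
    Finset.univ.filter (fun k : Fin (d + 3) => 2 ≤ (k : ℕ) ∧ (k : ℕ) ≤ d) with hS
  have hsub : Finset.Icc 1 d ⊆ S.image g := by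
    intro x hx
    have hx0 : x ∈ pathWindow d g 0 := by
      rcases h0 with h | h | h <;> (rw [h]; exact Finset.mem_insert_of_mem hx)
    have hx2 : x ∈ pathWindow d g 2 := by
      rcases h2 with h | h | h <;> (rw [h]; exact Finset.mem_insert_of_mem hx)
    simp only [pathWindow, Finset.mem_image, Finset.mem_filter, Finset.mem_univ,
      true_and] at hx0 hx2
    obtain ⟨k, ⟨hk1, hk2⟩, hgk⟩ := hx0
    obtain ⟨k', ⟨hk'1, hk'2⟩, hgk'⟩ := hx2
    have hkk : k = k' := hinj (by rw [hgk, hgk'])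
    simp only [hS, Finset.mem_image, Finset.mem_filter, Finset.mem_univ, true_and]
    exact ⟨k, ⟨by omega, by omega⟩, hgk⟩
  have h1 : (Finset.Icc 1 d).card ≤ (S.image g).card := Finset.card_le_card hsub
  have h2' : (S.image g).card ≤ S.card := Finset.card_image_le
  have h3 : (S.image Fin.val).card = S.card :=
    Finset.card_image_of_injective _ Fin.val_injective
  have h4 : S.image Fin.val ⊆ Finset.Icc 2 d := by
    intro x hx
    simp only [hS, Finset.mem_image, Finset.mem_filter, Finset.mem_univ, true_and] at hx
    obtain ⟨k, ⟨hk1, hk2⟩, rfl⟩ := hx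
    simp only [Finset.mem_Icc]
    exact ⟨hk1, hk2⟩
  have h5 : (S.image Fin.val).card ≤ (Finset.Icc 2 d).card := Finset.card_le_card h4
  rw [Nat.card_Icc] at h1 h5
  omega

/-- For every `d ≥ 2`, the complex `W^d` admits no weak Hamiltonian path: for every
bijection `g : Fin (d+3) → {1,...,d+3}` there is a vertex `w` belonging to no window
`{g i, ..., g (i+d)}` (with `i + d ≤ d+2`) that is a facet of `W^d`. -/
theorem Wd_no_weak_hamiltonian_path (d : ℕ) (hd : 2 ≤ d) (g : Fin (d + 3) → ℕ)
    (hinj : Function.Injective g) (hmem : ∀ k, g k ∈ Finset.Icc 1 (d + 3))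
    (hsurj : ∀ v ∈ Finset.Icc 1 (d + 3), ∃ k, g k = v) :
    ∃ w ∈ Finset.Icc 1 (d + 3), ∀ i : ℕ, i + d ≤ d + 2 →
      isFacetW d (pathWindow d g i) → w ∉ pathWindow d g i := by

  classical
  have key : ∀ W, isFacetW d W →
      ∃ a, (a = 1 ∨ a = 2 ∨ a = 3) ∧ W = insert (d + a) (Finset.Icc 1 d) := by
    rintro W (h | h | h)
    exacts [⟨1, Or.inl rfl, h⟩, ⟨2, Or.inr (Or.inl rfl), h⟩, ⟨3, Or.inr (Or.inr rfl), h⟩]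
  have hnot : ∀ c a : ℕ, (c = 1 ∨ c = 2 ∨ c = 3) → c ≠ a →
      d + c ∉ insert (d + a) (Finset.Icc 1 d) := by
    intro c a hc hca
    simp only [Finset.mem_insert, Finset.mem_Icc]
    omega
  have hmemU : ∀ c : ℕ, (c = 1 ∨ c = 2 ∨ c = 3) → d + c ∈ Finset.Icc 1 (d + 3) := by
    intro c hc
    simp only [Finset.mem_Icc]
    omega
  by_cases h0 : isFacetW d (pathWindow d g 0)
  · by_cases h2 : isFacetW d (pathWindow d g 2)
    · exact (not_facet_02 d hd g hinj h0 h2).elim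
    · obtain ⟨a, ha, hWa⟩ := key _ h0
      by_cases h1 : isFacetW d (pathWindow d g 1)
      · obtain ⟨b, hb, hWb⟩ := key _ h1
        obtain ⟨c, hc, hca, hcb⟩ := exists_third a b
        refine ⟨d + c, hmemU c hc, ?_⟩
        intro i hi hFi
        have hi2 : i ≤ 2 := by omega
        interval_cases i
        · rw [hWa]; exact hnot c a hc hca
        · rw [hWb]; exact hnot c b hc hcb
        · exact absurd hFi h2
      · obtain ⟨c, hc, hca, _⟩ := exists_third a a
        refine ⟨d + c, hmemU c hc, ?_⟩
        intro i hi hFi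
        have hi2 : i ≤ 2 := by omega
        interval_cases i
        · rw [hWa]; exact hnot c a hc hca
        · exact absurd hFi h1
        · exact absurd hFi h2
  · by_cases h2 : isFacetW d (pathWindow d g 2)
    · obtain ⟨a, ha, hWa⟩ := key _ h2
      by_cases h1 : isFacetW d (pathWindow d g 1)
      · obtain ⟨b, hb, hWb⟩ := key _ h1
        obtain ⟨c, hc, hca, hcb⟩ := exists_third a b
        refine ⟨d + c, hmemU c hc, ?_⟩
        intro i hi hFi
        have hi2 : i ≤ 2 := by omega
        interval_cases i
        · exact absurd hFi h0
        · rw [hWb]; exact hnot c b hc hcb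
        · rw [hWa]; exact hnot c a hc hca
      · obtain ⟨c, hc, hca, _⟩ := exists_third a a
        refine ⟨d + c, hmemU c hc, ?_⟩
        intro i hi hFi
        have hi2 : i ≤ 2 := by omega
        interval_cases i
        · exact absurd hFi h0
        · exact absurd hFi h1
        · rw [hWa]; exact hnot c a hc hca
    · by_cases h1 : isFacetW d (pathWindow d g 1)
      · obtain ⟨a, ha, hWa⟩ := key _ h1
        obtain ⟨c, hc, hca, _⟩ := exists_third a a
        refine ⟨d + c, hmemU c hc, ?_⟩
        intro i hi hFi
        have hi2 : i ≤ 2 := by omega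
        interval_cases i
        · exact absurd hFi h0
        · rw [hWa]; exact hnot c a hc hca
        · exact absurd hFi h2
      · refine ⟨1, by simp, ?_⟩
        intro i hi hFi
        have hi2 : i ≤ 2 := by omega
        interval_cases i
        · exact absurd hFi h0
        · exact absurd hFi h1
        · exact absurd hFi h2
end

section
/- For every integer d ≥ 2, the complex W^d admits no weak Hamiltonian cycle; that is, for every bijection f : ZMod (d+3) → {1, ..., d+3} there exists a vertex w that belongs to no window W_i(f) that is a facet of W^d. -/
lemma mem_cycWindow_of_lt {d : ℕ} (f : ZMod (d+3) → ℕ) (i : ZMod (d+3)) (j : ℕ)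
    (hj : j < d + 1) : f (i + (j : ZMod (d+3))) ∈ cycWindow d f i :=
  Finset.mem_image.2 ⟨j, Finset.mem_range.2 hj, rfl⟩

lemma eq_of_notMem_cycWindow {d : ℕ} (f : ZMod (d+3) → ℕ) (i x : ZMod (d+3))
    (hx : f x ∉ cycWindow d f i) :
    x = i + ((d+1 : ℕ) : ZMod (d+3)) ∨ x = i + ((d+2 : ℕ) : ZMod (d+3)) := by
  have hxval : x = i + (((x - i).val : ℕ) : ZMod (d+3)) := by
    rw [(ZMod.natCast_val (x - i)).trans (ZMod.cast_id _ _)]; ring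
  have hlt : (x - i).val < d + 3 := ZMod.val_lt _
  rcases lt_or_ge ((x - i).val) (d + 1) with h | h
  · exact absurd (hxval ▸ mem_cycWindow_of_lt f i _ h) hx
  · have : (x - i).val = d + 1 ∨ (x - i).val = d + 2 := by omega
    rcases this with h' | h'
    · left; rw [hxval, h']
    · right; rw [hxval, h']

/-- Main auxiliary lemma: if `t` is a tip value whose two companion tips sit at
non-adjacent positions, then `t` belongs to no facet window. -/
lemma aux_tip (d : ℕ) (f : ZMod (d+3) → ℕ) (hinj : Function.Injective f)
    (t t1 t2 : ℕ) (ht : d + 1 ≤ t) (ht1 : d + 1 ≤ t1) (ht2 : d + 1 ≤ t2)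
    (ht3 : t ≤ d + 3) (ht13 : t1 ≤ d + 3) (ht23 : t2 ≤ d + 3)
    (hne1 : t1 ≠ t) (hne2 : t2 ≠ t) (hne12 : t1 ≠ t2)
    (p1 p2 : ZMod (d+3)) (hp1 : f p1 = t1) (hp2 : f p2 = t2)
    (hnc : ¬ (p2 = p1 + 1 ∨ p1 = p2 + 1)) :
    ∀ i : ZMod (d+3), isFacetW d (cycWindow d f i) → t ∉ cycWindow d f i := by
  intro i hfac hmemw
  -- The window, being a facet, is `insert (d+k) (Icc 1 d)` for some k; since `t` is in it
  -- and `t ≥ d+1`, the tip of the facet is `t` itself, so `t1, t2` are not in the window.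
  have key : ∀ s : ℕ, d + 1 ≤ s → s ≤ d + 3 → s ≠ t → s ∉ cycWindow d f i := by
    intro s hs1 hs2 hst hsmem
    rcases hfac with hF | hF | hF <;>
    · rw [hF] at hmemw hsmem
      rcases Finset.mem_insert.1 hmemw with h | h
      · rcases Finset.mem_insert.1 hsmem with h' | h'
        · exact hst (h' ▸ h.symm ▸ rfl)
        · have := (Finset.mem_Icc.1 h').2; omega
      · have := (Finset.mem_Icc.1 h).2; omega
  have h1 : f p1 ∉ cycWindow d f i := by rw [hp1]; exact key t1 ht1 ht13 hne1
  have h2 : f p2 ∉ cycWindow d f i := by rw [hp2]; exact key t2 ht2 ht23 hne2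
  have e1 := eq_of_notMem_cycWindow f i p1 h1
  have e2 := eq_of_notMem_cycWindow f i p2 h2
  have hp12 : p1 ≠ p2 := fun h => hne12 (hp1 ▸ hp2 ▸ h ▸ rfl)
  have hcast : ((d+2 : ℕ) : ZMod (d+3)) = ((d+1 : ℕ) : ZMod (d+3)) + 1 := by push_cast; ring
  rcases e1 with e1 | e1 <;> rcases e2 with e2 | e2
  · exact hp12 (e1.trans e2.symm)
  · exact hnc (Or.inl (by rw [e1, e2, hcast]; ring))
  · exact hnc (Or.inr (by rw [e1, e2, hcast]; ring))
  · exact hp12 (e1.trans e2.symm)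

/-- For every `d ≥ 2`, the complex `W^d` admits no weak Hamiltonian cycle: for every
bijection `f : ZMod (d+3) → {1,...,d+3}` there is a vertex `w` belonging to no window
`W_i(f)` that is a facet of `W^d`. -/
theorem Wd_no_weak_hamiltonian_cycle (d : ℕ) (hd : 2 ≤ d) (f : ZMod (d + 3) → ℕ)
    (hinj : Function.Injective f) (hmem : ∀ i, f i ∈ Finset.Icc 1 (d + 3))
    (hsurj : ∀ v ∈ Finset.Icc 1 (d + 3), ∃ i, f i = v) :
    ∃ w ∈ Finset.Icc 1 (d + 3), ∀ i : ZMod (d + 3),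
      isFacetW d (cycWindow d f i) → w ∉ cycWindow d f i := by
  obtain ⟨a, ha⟩ := hsurj (d+1) (Finset.mem_Icc.2 ⟨by omega, by omega⟩)
  obtain ⟨b, hb⟩ := hsurj (d+2) (Finset.mem_Icc.2 ⟨by omega, by omega⟩)
  obtain ⟨c, hc⟩ := hsurj (d+3) (Finset.mem_Icc.2 ⟨by omega, by omega⟩)
  by_cases h1 : (b = c + 1 ∨ c = b + 1)
  · by_cases h2 : (a = c + 1 ∨ c = a + 1)
    · by_cases h3 : (a = b + 1 ∨ b = a + 1)
      · -- impossible: three distinct pairwise adjacent positions on a cycle of length ≥ 5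
        exfalso
        have hbc : b ≠ c := fun h => by rw [h, hc] at hb; omega
        have hdvd : ∀ k : ℕ, ((k : ℕ) : ZMod (d+3)) = 0 → (d+3) ∣ k := fun k hk =>
          (ZMod.natCast_eq_zero_iff k (d+3)).1 hk
        have h1' : ¬ (d+3) ∣ 1 := fun h => by have := Nat.le_of_dvd one_pos h; omega
        have h3' : ¬ (d+3) ∣ 3 := fun h => by have := Nat.le_of_dvd (by norm_num) h; omega
        rcases h2 with h2 | h2 <;> rcases h3 with h3 | h3
        · exact hbc (add_right_cancel (h3.symm.trans h2))
        · rcases h1 with h1 | h1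
          · apply h1'; apply hdvd 1; push_cast
            linear_combination h1 - h3 - h2
          · apply h3'; apply hdvd 3; push_cast
            linear_combination - h3 - h2 - h1
        · rcases h1 with h1 | h1
          · apply h3'; apply hdvd 3; push_cast
            linear_combination - h1 - h2 - h3
          · apply h1'; apply hdvd 1; push_cast
            linear_combination h1 - h2 - h3
        · exact hbc (h3.trans h2.symm)
      · exact ⟨d+3, Finset.mem_Icc.2 ⟨by omega, le_rfl⟩,
          aux_tip d f hinj (d+3) (d+2) (d+1) (by omega) (by omega) (by omega)
            le_rfl (by omega) (by omega) (by omega) (by omega) (by omega)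
            b a hb ha h3⟩
    · exact ⟨d+2, Finset.mem_Icc.2 ⟨by omega, by omega⟩,
        aux_tip d f hinj (d+2) (d+3) (d+1) (by omega) (by omega) (by omega)
          (by omega) le_rfl (by omega) (by omega) (by omega) (by omega)
          c a hc ha (by tauto)⟩
  · exact ⟨d+1, Finset.mem_Icc.2 ⟨by omega, by omega⟩,
      aux_tip d f hinj (d+1) (d+2) (d+3) (by omega) (by omega) (by omega)
        (by omega) (by omega) le_rfl (by omega) (by omega) (by omega)
        b c hb hc (by tauto)⟩
end

section
/- For every integer d ≥ 2, the complex W^d is maximally non-weakly-Hamiltonian: for every (d+1)-element subset F of {1, ..., d+3} that is not a facet of W^d, the pure d-complex whose facet set is that of W^d together with F admits a weak Hamiltonian cycle. -/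
/-- The image of `getD` over indices of a list is its `toFinset`. -/
lemma image_getD_toFinset (l : List ℕ) :
    (Finset.range l.length).image (fun j => l.getD j 0) = l.toFinset := by
  ext v
  simp only [Finset.mem_image, Finset.mem_range, List.mem_toFinset]
  constructor
  · rintro ⟨j, hj, rfl⟩
    rw [List.getD_eq_getElem l 0 hj]
    exact List.getElem_mem hj
  · intro hv
    obtain ⟨j, hj, rfl⟩ := List.mem_iff_getElem.mp hv
    exact ⟨j, hj, List.getD_eq_getElem l 0 hj⟩

/-- For every `d ≥ 2`, the complex `W^d` is maximally non-weakly-Hamiltonian: adding any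
`(d+1)`-element subset `F` of `{1,...,d+3}` that is not already a facet of `W^d` produces
a complex admitting a weak Hamiltonian cycle, i.e. there is a bijection
`f : ZMod (d+3) → {1,...,d+3}` such that every vertex lies in some window that is a facet
of `W^d ∪ {F}`. -/
theorem Wd_maximally_non_weakly_hamiltonian (d : ℕ) (hd : 2 ≤ d) (F : Finset ℕ)
    (hFsub : F ⊆ Finset.Icc 1 (d + 3)) (hFcard : F.card = d + 1) (hF : ¬ isFacetW d F) :
    ∃ f : ZMod (d + 3) → ℕ, Function.Injective f ∧ (∀ i, f i ∈ Finset.Icc 1 (d + 3)) ∧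
      (∀ v ∈ Finset.Icc 1 (d + 3), ∃ i, f i = v) ∧
      ∀ v ∈ Finset.Icc 1 (d + 3), ∃ i : ZMod (d + 3),
        (isFacetW d (cycWindow d f i) ∨ cycWindow d f i = F) ∧ v ∈ cycWindow d f i := by
  haveI : NeZero (d + 3) := ⟨by omega⟩
  set S : Finset ℕ := Finset.Icc 1 (d + 3) with hS
  have hScard : S.card = d + 3 := by simp [hS]
  set G : Finset ℕ := S \ F with hG
  have hGcard : G.card = 2 := by
    rw [hG, Finset.card_sdiff_of_subset hFsub, hScard, hFcard]; omega
  obtain ⟨a, b, hab, hGab⟩ := Finset.card_eq_two.mp hGcard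
  have hFG : F = S \ G := (Finset.sdiff_sdiff_eq_self hFsub).symm
  have hGS : G ⊆ S := Finset.sdiff_subset
  have haG : a ∈ G := by rw [hGab]; simp
  have hbG : b ∈ G := by rw [hGab]; simp
  have haS : a ∈ S := hGS haG
  have hbS : b ∈ S := hGS hbG
  have haB : 1 ≤ a ∧ a ≤ d + 3 := Finset.mem_Icc.mp haS
  have hbB : 1 ≤ b ∧ b ≤ d + 3 := Finset.mem_Icc.mp hbS
  -- no two of d+1, d+2, d+3 are both outside F
  have hkey : ∀ u v : ℕ, u ≠ v → u ∈ G → v ∈ G → G = {u, v} := by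
    intro u v huv hu hv
    refine (Finset.eq_of_subset_of_card_le ?_ ?_).symm
    · intro w hw
      rcases Finset.mem_insert.mp hw with rfl | hw
      · exact hu
      · rcases Finset.mem_singleton.mp hw with rfl; exact hv
    · rw [hGcard, Finset.card_insert_of_notMem (by simp [huv]), Finset.card_singleton]
  have h12 : ¬(d + 1 ∈ G ∧ d + 2 ∈ G) := by
    rintro ⟨h1, h2⟩
    apply hF
    right; right
    rw [hFG, hkey _ _ (by omega) h1 h2]
    ext w
    simp only [Finset.mem_sdiff, hS, Finset.mem_Icc, Finset.mem_insert, Finset.mem_singleton]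
    omega
  have h13 : ¬(d + 1 ∈ G ∧ d + 3 ∈ G) := by
    rintro ⟨h1, h2⟩
    apply hF
    right; left
    rw [hFG, hkey _ _ (by omega) h1 h2]
    ext w
    simp only [Finset.mem_sdiff, hS, Finset.mem_Icc, Finset.mem_insert, Finset.mem_singleton]
    omega
  have h23 : ¬(d + 2 ∈ G ∧ d + 3 ∈ G) := by
    rintro ⟨h1, h2⟩
    apply hF
    left
    rw [hFG, hkey _ _ (by omega) h1 h2]
    ext w
    simp only [Finset.mem_sdiff, hS, Finset.mem_Icc, Finset.mem_insert, Finset.mem_singleton]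
    omega
  set x : ℕ := if d + 1 ∈ G then d + 2 else d + 1 with hx
  set y : ℕ := if d + 3 ∈ G then d + 2 else d + 3 with hy
  have hxG : x ∉ G := by
    rw [hx]
    split_ifs with h1
    · exact fun h2 => h12 ⟨h1, h2⟩
    · exact h1
  have hyG : y ∉ G := by
    rw [hy]
    split_ifs with h3
    · exact fun h2 => h23 ⟨h2, h3⟩
    · exact h3
  have hxy : x ≠ y := by
    rw [hx, hy]
    split_ifs with h1 h3 h3
    · exact absurd ⟨h1, h3⟩ h13
    · omega
    · omega
    · omega
  have hxB : d + 1 ≤ x ∧ x ≤ d + 3 := by rw [hx]; split_ifs <;> omega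
  have hyB : d + 1 ≤ y ∧ y ≤ d + 3 := by rw [hy]; split_ifs <;> omega
  have hxS : x ∈ S := by rw [hS, Finset.mem_Icc]; omega
  have hyS : y ∈ S := by rw [hS, Finset.mem_Icc]; omega
  have hfacet : isFacetW d (S \ {x, y}) := by
    have hxv : x = d + 2 ∨ x = d + 1 := by rw [hx]; split_ifs <;> simp
    have hyv : y = d + 2 ∨ y = d + 3 := by rw [hy]; split_ifs <;> simp
    rcases hxv with hxv | hxv <;> rcases hyv with hyv | hyv
    · omega
    · -- {d+2, d+3} removed → apex d+1
      left
      ext w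
      simp only [Finset.mem_sdiff, hS, Finset.mem_Icc, Finset.mem_insert, Finset.mem_singleton,
        hxv, hyv]
      omega
    · -- {d+1, d+2} removed → apex d+3
      right; right
      ext w
      simp only [Finset.mem_sdiff, hS, Finset.mem_Icc, Finset.mem_insert, Finset.mem_singleton,
        hxv, hyv]
      omega
    · -- {d+1, d+3} removed → apex d+2
      right; left
      ext w
      simp only [Finset.mem_sdiff, hS, Finset.mem_Icc, Finset.mem_insert, Finset.mem_singleton,
        hxv, hyv]
      omega
  have hxa : x ≠ a := fun h => hxG (h ▸ haG)
  have hxb : x ≠ b := fun h => hxG (h ▸ hbG)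
  have hya : y ≠ a := fun h => hyG (h ▸ haG)
  have hyb : y ≠ b := fun h => hyG (h ▸ hbG)
  -- the middle part of the arrangement
  set T : Finset ℕ := S \ {x, y, a, b} with hT
  have hTanti : ∀ w ∈ T, w ≠ x ∧ w ≠ y ∧ w ≠ a ∧ w ≠ b := by
    intro w hw
    rw [hT, Finset.mem_sdiff] at hw
    simp only [Finset.mem_insert, Finset.mem_singleton, not_or] at hw
    exact hw.2
  have h4card : ({x, y, a, b} : Finset ℕ).card = 4 := by
    rw [show ({x, y, a, b} : Finset ℕ) = insert x (insert y (insert a {b})) from rfl,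
      Finset.card_insert_of_notMem (by simp [hxy, hxa, hxb]),
      Finset.card_insert_of_notMem (by simp [hya, hyb]),
      Finset.card_insert_of_notMem (by simp [hab]), Finset.card_singleton]
  have hTcard : T.card = d - 1 := by
    rw [hT, Finset.card_sdiff_of_subset (by
      intro w hw
      simp only [Finset.mem_insert, Finset.mem_singleton] at hw
      rcases hw with rfl | rfl | rfl | rfl <;> assumption), hScard, h4card]; omega
  set R : List ℕ := T.sort (· ≤ ·) with hR
  have hRlen : R.length = d - 1 := by rw [hR, Finset.length_sort, hTcard]
  have hRmem : ∀ w : ℕ, w ∈ R ↔ w ∈ T := by intro w; rw [hR, Finset.mem_sort]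
  have hRnodup : R.Nodup := by rw [hR]; exact T.sort_nodup _
  set L : List ℕ := x :: y :: (R ++ [a, b]) with hL
  have hLlen : L.length = d + 3 := by
    rw [hL]; simp [hRlen]; omega
  have hLnodup : L.Nodup := by
    rw [hL]
    refine List.nodup_cons.mpr ⟨?_, List.nodup_cons.mpr ⟨?_, ?_⟩⟩
    · intro h
      simp only [List.mem_cons, List.mem_append, List.not_mem_nil, or_false] at h
      rcases h with h | h | h | h
      · exact hxy h
      · exact ((hTanti x ((hRmem x).mp h)).1) rfl
      · exact hxa h
      · exact hxb h
    · intro h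
      simp only [List.mem_cons, List.mem_append, List.not_mem_nil, or_false] at h
      rcases h with h | h | h
      · exact ((hTanti y ((hRmem y).mp h)).2.1) rfl
      · exact hya h
      · exact hyb h
    · refine List.Nodup.append hRnodup (by simp [hab]) ?_
      intro w hwR hwab
      simp only [List.mem_cons, List.mem_singleton, List.not_mem_nil, or_false] at hwab
      have := hTanti w ((hRmem w).mp hwR)
      rcases hwab with rfl | rfl
      · exact this.2.2.1 rfl
      · exact this.2.2.2 rfl
  have hLset : L.toFinset = S := by
    ext w
    simp only [hL, List.toFinset_cons, List.toFinset_append, Finset.mem_insert,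
      Finset.mem_union, List.mem_toFinset, hRmem w, List.mem_cons, List.mem_singleton,
      List.not_mem_nil, or_false, hT, Finset.mem_sdiff]
    constructor
    · rintro (rfl | rfl | ⟨hw, -⟩ | rfl | rfl) <;> assumption
    · intro hw
      by_cases h1 : w = x
      · left; exact h1
      by_cases h2 : w = y
      · right; left; exact h2
      by_cases h3 : w = a
      · right; right; right; left; exact h3
      by_cases h4 : w = b
      · right; right; right; right; exact h4
      · right; right; left
        exact ⟨hw, by simp [h1, h2, h3, h4]⟩
  set f : ZMod (d + 3) → ℕ := fun i => L.getD i.val 0 with hf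
  have hvlt : ∀ i : ZMod (d + 3), i.val < L.length := by
    intro i; rw [hLlen]; exact ZMod.val_lt i
  have hfval : ∀ k : ℕ, k < d + 3 → f ((k : ℕ) : ZMod (d + 3)) = L.getD k 0 := by
    intro k hk
    rw [hf]
    simp only
    rw [ZMod.val_natCast, Nat.mod_eq_of_lt hk]
  have hinj : Function.Injective f := by
    intro i j hij
    rw [hf] at hij
    simp only at hij
    rw [List.getD_eq_getElem L 0 (hvlt i), List.getD_eq_getElem L 0 (hvlt j)] at hij
    exact ZMod.val_injective _ (hLnodup.getElem_inj_iff.mp hij)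
  have hmem : ∀ i, f i ∈ S := by
    intro i
    rw [← hLset, List.mem_toFinset, hf]
    simp only
    rw [List.getD_eq_getElem L 0 (hvlt i)]
    exact List.getElem_mem (hvlt i)
  have hsurj : ∀ v ∈ S, ∃ i, f i = v := by
    intro v hv
    rw [← hLset, List.mem_toFinset] at hv
    obtain ⟨k, hk, rfl⟩ := List.mem_iff_getElem.mp hv
    rw [hLlen] at hk
    refine ⟨(k : ZMod (d + 3)), ?_⟩
    rw [hfval k hk, List.getD_eq_getElem L 0 (by rw [hLlen]; exact hk)]
  -- windows
  have hzero : ((0 : ZMod (d + 3)) : ZMod (d + 3)) = ((0 : ℕ) : ZMod (d + 3)) := by norm_num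
  have hw0 : cycWindow d f 0 = F := by
    rw [cycWindow]
    have heval : ∀ j ∈ Finset.range (d + 1),
        f ((0 : ZMod (d + 3)) + (j : ZMod (d + 3))) = (x :: y :: R).getD j 0 := by
      intro j hj
      rw [Finset.mem_range] at hj
      rw [zero_add, hfval j (by omega)]
      have hjlt : j < (x :: y :: R).length := by simp [hRlen]; omega
      rw [hL, show (x :: y :: (R ++ [a, b])) = (x :: y :: R) ++ [a, b] from rfl,
        List.getD_append _ _ _ _ hjlt]
    rw [Finset.image_congr heval]
    have hlen1 : (x :: y :: R).length = d + 1 := by simp [hRlen]; omega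
    rw [← hlen1, image_getD_toFinset]
    ext w
    simp only [List.toFinset_cons, Finset.mem_insert, List.mem_toFinset, hRmem w, hT,
      Finset.mem_sdiff, hFG, hGab, Finset.mem_insert, Finset.mem_singleton]
    constructor
    · rintro (rfl | rfl | ⟨hw, hno⟩)
      · exact ⟨hxS, by push_neg; exact ⟨hxa, hxb⟩⟩
      · exact ⟨hyS, by push_neg; exact ⟨hya, hyb⟩⟩
      · simp only [Finset.mem_insert, Finset.mem_singleton, not_or] at hno
        exact ⟨hw, by push_neg; exact ⟨hno.2.2.1, hno.2.2.2⟩⟩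
    · rintro ⟨hw, hno⟩
      push_neg at hno
      by_cases h1 : w = x
      · left; exact h1
      by_cases h2 : w = y
      · right; left; exact h2
      · right; right
        exact ⟨hw, by simp [h1, h2, hno.1, hno.2]⟩
  have hw2 : cycWindow d f 2 = S \ {x, y} := by
    rw [cycWindow]
    have h2v : (2 : ZMod (d + 3)) = ((2 : ℕ) : ZMod (d + 3)) := by norm_num
    have heval : ∀ j ∈ Finset.range (d + 1),
        f ((2 : ZMod (d + 3)) + (j : ZMod (d + 3))) = (R ++ [a, b]).getD j 0 := by
      intro j hj
      rw [Finset.mem_range] at hj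
      rw [h2v, ← Nat.cast_add, hfval (2 + j) (by omega)]
      rw [hL, show (2 + j) = (j + 1) + 1 from by omega, List.getD_cons_succ, List.getD_cons_succ]
    rw [Finset.image_congr heval]
    have hlen2 : (R ++ [a, b]).length = d + 1 := by simp [hRlen]; omega
    rw [← hlen2, image_getD_toFinset]
    ext w
    simp only [List.toFinset_append, Finset.mem_union, List.mem_toFinset, hRmem w, hT,
      Finset.mem_sdiff, List.mem_cons, List.mem_singleton, List.not_mem_nil, or_false,
      Finset.mem_insert, Finset.mem_singleton]
    constructor
    · rintro (⟨hw, hno⟩ | rfl | rfl)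
      · simp only [Finset.mem_insert, Finset.mem_singleton, not_or] at hno
        exact ⟨hw, by push_neg; exact ⟨hno.1, hno.2.1⟩⟩
      · exact ⟨haS, by push_neg; exact ⟨fun h => hxa h.symm, fun h => hya h.symm⟩⟩
      · exact ⟨hbS, by push_neg; exact ⟨fun h => hxb h.symm, fun h => hyb h.symm⟩⟩
    · rintro ⟨hw, hno⟩
      push_neg at hno
      by_cases h3 : w = a
      · right; left; exact h3
      by_cases h4 : w = b
      · right; right; exact h4
      · left
        exact ⟨hw, by simp [hno.1, hno.2, h3, h4]⟩
  refine ⟨f, hinj, hmem, hsurj, ?_⟩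
  intro v hv
  by_cases hvG : v ∈ G
  · refine ⟨2, Or.inl (hw2 ▸ hfacet), ?_⟩
    rw [hw2, Finset.mem_sdiff]
    refine ⟨hv, ?_⟩
    simp only [Finset.mem_insert, Finset.mem_singleton, not_or]
    exact ⟨fun h => hxG (h ▸ hvG), fun h => hyG (h ▸ hvG)⟩
  · refine ⟨0, Or.inr hw0, ?_⟩
    rw [hw0, hFG, Finset.mem_sdiff]
    exact ⟨hv, hvG⟩
end

section
/- For every 3-element subset F of {0, 1, ..., 5} with 0 ∉ F (i.e., F not a facet of D_2), the pure 2-complex whose facet set is that of D_2 together with F admits a weak Hamiltonian cycle. -/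
/-- A facet of the complex `D_2` on vertex set `Fin 6` (standing for `{0,...,5}`):
a `3`-element subset containing the vertex `0`. -/
def isFacetD2 (F : Finset (Fin 6)) : Prop :=
  F.card = 3 ∧ (0 : Fin 6) ∈ F

lemma cycWindow_two {V : Type*} [DecidableEq V] (f : ZMod 6 → V) (i : ZMod 6) :
    cycWindow 2 f i = {f i, f (i+1), f (i+2)} := by
  have : Finset.range 3 = {0, 1, 2} := by decide
  simp [cycWindow, this, Finset.image_insert]

/-- For every 3-element subset `F` of `{0,...,5}` with `0 ∉ F` (so `F` is not a facet of
`D_2`), the complex `D_2 ∪ {F}` admits a weak Hamiltonian cycle: there is a bijection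
`f : ZMod 6 → {0,...,5}` such that every vertex lies in some window that is a facet of
`D_2 ∪ {F}`. -/
theorem D2_plus_triangle_weakly_hamiltonian (F : Finset (Fin 6))
    (hFcard : F.card = 3) (hF0 : (0 : Fin 6) ∉ F) :
    ∃ f : ZMod 6 → Fin 6, Function.Bijective f ∧
      ∀ v : Fin 6, ∃ i : ZMod 6,
        (isFacetD2 (cycWindow 2 f i) ∨ cycWindow 2 f i = F) ∧ v ∈ cycWindow 2 f i := by
  obtain ⟨a, b, c, hab, hac, hbc, hFeq⟩ := Finset.card_eq_three.mp hFcard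
  have hG : ((insert (0:Fin 6) F)ᶜ : Finset (Fin 6)).card = 2 := by
    rw [Finset.card_compl, Finset.card_insert_of_notMem hF0, hFcard]
    rfl
  obtain ⟨x, y, hxy, hGeq⟩ := Finset.card_eq_two.mp hG
  have hx : x ∉ insert (0:Fin 6) F := by
    rw [← Finset.mem_compl, hGeq]; simp
  have hy : y ∉ insert (0:Fin 6) F := by
    rw [← Finset.mem_compl, hGeq]; simp
  have hx0 : x ≠ 0 := fun h => hx (by simp [h])
  have hy0 : y ≠ 0 := fun h => hy (by simp [h])
  set f : ZMod 6 → Fin 6 := fun i =>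
    if i = 0 then a else if i = 1 then b else if i = 2 then c
    else if i = 3 then 0 else if i = 4 then x else y with hf
  have hf0 : f 0 = a := by simp [hf]
  have hf1 : f 1 = b := by
    simp [hf, show (1:ZMod 6) ≠ 0 by decide]
  have hf2 : f 2 = c := by
    simp [hf, show (2:ZMod 6) ≠ 0 by decide, show (2:ZMod 6) ≠ 1 by decide]
  have hf3 : f 3 = (0:Fin 6) := by
    simp [hf, show (3:ZMod 6) ≠ 0 by decide, show (3:ZMod 6) ≠ 1 by decide,
      show (3:ZMod 6) ≠ 2 by decide]
  have hf4 : f 4 = x := by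
    simp [hf, show (4:ZMod 6) ≠ 0 by decide, show (4:ZMod 6) ≠ 1 by decide,
      show (4:ZMod 6) ≠ 2 by decide, show (4:ZMod 6) ≠ 3 by decide]
  have hf5 : f 5 = y := by
    simp [hf, show (5:ZMod 6) ≠ 0 by decide, show (5:ZMod 6) ≠ 1 by decide,
      show (5:ZMod 6) ≠ 2 by decide, show (5:ZMod 6) ≠ 3 by decide,
      show (5:ZMod 6) ≠ 4 by decide]
  have hsurj : Function.Surjective f := by
    intro v
    by_cases hv : v ∈ insert (0:Fin 6) F
    · rcases Finset.mem_insert.mp hv with h0 | hvF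
      · exact ⟨3, by rw [hf3, h0]⟩
      · rw [hFeq] at hvF
        rcases Finset.mem_insert.mp hvF with h | hvF
        · exact ⟨0, by rw [hf0, h]⟩
        · rcases Finset.mem_insert.mp hvF with h | h
          · exact ⟨1, by rw [hf1, h]⟩
          · exact ⟨2, by rw [hf2, Finset.mem_singleton.mp h]⟩
    · have : v ∈ ({x, y} : Finset (Fin 6)) := by
        rw [← hGeq, Finset.mem_compl]; exact hv
      rcases Finset.mem_insert.mp this with h | h
      · exact ⟨4, by rw [hf4, h]⟩
      · exact ⟨5, by rw [hf5, Finset.mem_singleton.mp h]⟩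
  have hbij : Function.Bijective f :=
    (Fintype.bijective_iff_surjective_and_card f).mpr ⟨hsurj, rfl⟩
  refine ⟨f, hbij, ?_⟩
  have hW0 : cycWindow 2 f 0 = F := by
    rw [cycWindow_two]
    norm_num [hf0, hf1, hf2, hFeq]
  have hW3 : cycWindow 2 f 3 = {(0:Fin 6), x, y} := by
    rw [cycWindow_two]
    norm_num
    rw [hf3, hf4, hf5]
  have hW3facet : isFacetD2 (cycWindow 2 f 3) := by
    rw [hW3]
    constructor
    · rw [Finset.card_insert_of_notMem, Finset.card_insert_of_notMem,
        Finset.card_singleton] <;> simp [hxy, Ne.symm hx0, Ne.symm hy0]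
    · simp
  intro v
  by_cases hv : v ∈ insert (0:Fin 6) F
  · rcases Finset.mem_insert.mp hv with h0 | hvF
    · exact ⟨3, Or.inl hW3facet, by rw [hW3, h0]; simp⟩
    · exact ⟨0, Or.inr hW0, by rw [hW0]; exact hvF⟩
  · have : v ∈ ({x, y} : Finset (Fin 6)) := by
      rw [← hGeq, Finset.mem_compl]; exact hv
    exact ⟨3, Or.inl hW3facet, by rw [hW3]; simp at this ⊢; tauto⟩
end

section
/- For every integer d ≥ 2, the dual graph G_d of the complex C_d has no Hamiltonian cycle. -/
instance (d : ℕ) : NeZero (d + 12) := ⟨by omega⟩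

/-- The natural labeling of the vertex set `{1,...,n}` (with `n = d + 12`) by `ZMod n`:
each residue is sent to its representative in `{1,...,n}`. -/
def repC (d : ℕ) (x : ZMod (d + 12)) : ℕ :=
  if x = 0 then d + 12 else x.val

/-- The facet `H_i = {i, i+1, ..., i+d}` of `C_d`, with entries reduced mod `n = d + 12`
to representatives in `{1,...,n}`. -/
def Hface (d : ℕ) (i : ℕ) : Finset ℕ :=
  (Finset.range (d + 1)).image (fun (j : ℕ) => repC d ((i : ZMod (d + 12)) + (j : ZMod (d + 12))))

def Fone (d : ℕ) : Finset ℕ := insert 1 (insert 5 (Finset.Icc 7 (d + 5)))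
def Ftwo (d : ℕ) : Finset ℕ := insert 1 (insert (d + 7) (Finset.Icc 7 (d + 5)))
def Fthree (d : ℕ) : Finset ℕ := insert 2 (insert 8 (Finset.Icc 10 (d + 8)))
def Ffour (d : ℕ) : Finset ℕ := insert 2 (insert (d + 10) (Finset.Icc 10 (d + 8)))

/-- The facets of the pure `d`-complex `C_d` on vertex set `{1,...,d+12}`:
the faces `H_1, ..., H_n` together with `F_1, F_2, F_3, F_4`. -/
def facetsC (d : ℕ) : Finset (Finset ℕ) :=
  (Finset.Icc 1 (d + 12)).image (Hface d) ∪ {Fone d, Ftwo d, Fthree d, Ffour d}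

/-- The dual graph `G_d` of `C_d`: vertices are the facets of `C_d`, two facets being
adjacent iff their intersection has exactly `d` elements. -/
def dualGraphC (d : ℕ) : SimpleGraph {F : Finset ℕ // F ∈ facetsC d} where
  Adj A B := A ≠ B ∧ ((A : Finset ℕ) ∩ (B : Finset ℕ)).card = d
  symm := by
    constructor
    intro A B h
    exact ⟨h.1.symm, by rw [Finset.inter_comm]; exact h.2⟩
  loopless := by
    constructor
    intro A h
    exact h.1 rfl

section Auxiliary

open SimpleGraph Walk List

/-- If a list contains two distinct elements with the same image under `f`, the image list
has that value at least twice. -/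
private lemma two_le_count_map {α β : Type*} [DecidableEq α] [DecidableEq β] {l : List α}
    {f : α → β} {x y : α} (hx : x ∈ l) (hy : y ∈ l) (hxy : x ≠ y) (hf : f x = f y) :
    2 ≤ (l.map f).count (f x) := by
  have hperm : l ~ x :: l.erase x := List.perm_cons_erase hx
  have hy' : y ∈ l.erase x := (List.mem_erase_of_ne hxy.symm).2 hy
  have h1 : 1 ≤ ((l.erase x).map f).count (f x) := by
    rw [Nat.one_le_iff_ne_zero, Ne, List.count_eq_zero]
    intro hcon
    exact hcon (hf ▸ List.mem_map_of_mem hy')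
  have := (hperm.map f).count_eq (f x)
  simp only [List.map_cons, List.count_cons_self] at this
  omega

/-- In a Hamiltonian cycle, every vertex has exactly two neighbours along the cycle. -/
private lemma ham_two_edges {V : Type*} [DecidableEq V] {G : SimpleGraph V} {A : V}
    {p : G.Walk A A} (hp : p.IsHamiltonianCycle) (v : V) :
    ∃ x y, x ≠ y ∧ s(v, x) ∈ p.edges ∧ s(v, y) ∈ p.edges ∧
      ∀ c, s(v, c) ∈ p.edges → c = x ∨ c = y := by
  classical
  have hnil : ¬ p.Nil := hp.isCycle.not_nil
  have htail : ∀ u, p.support.tail.count u = 1 := by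
    intro u
    rw [← support_tail_of_not_nil p hnil]
    exact hp.isHamiltonian_tail u
  have htne : p.support.tail ≠ [] := by
    have h3 := hp.isCycle.three_le_length
    have : p.support.length = p.length + 1 := length_support p
    intro hcon
    rw [← List.length_eq_zero_iff] at hcon
    have := p.support_eq_cons
    have : p.support.length = p.support.tail.length + 1 := by
      rw [this]; simp
    omega
  have hlast : p.support.tail.getLast htne = A := by
    rw [List.getLast_tail]
    exact getLast_support p
  have hsplit : p.support.tail.dropLast ++ [A] = p.support.tail := by
    conv_rhs => rw [← List.dropLast_append_getLast htne]
    rw [hlast]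
  have hdropeq : p.support.dropLast = A :: p.support.tail.dropLast := by
    conv_lhs => rw [p.support_eq_cons, ← hsplit]
    rw [← List.cons_append, List.dropLast_concat]
  have hdrop : ∀ u, p.support.dropLast.count u = 1 := by
    intro u
    have h1 := htail u
    rw [← hsplit, List.count_append] at h1
    rw [hdropeq, List.count_cons]
    simp only [List.count_singleton] at h1
    by_cases h : u = A <;> simp [h] at h1 ⊢ <;> omega
  have hfst : ∀ u, (p.darts.map (fun d => d.toProd.1)).count u = 1 := by
    intro u; rw [p.map_fst_darts]; exact hdrop u
  have hsnd : ∀ u, (p.darts.map (fun d => d.toProd.2)).count u = 1 := by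
    intro u; rw [p.map_snd_darts]; exact htail u
  have hvf : v ∈ p.darts.map (fun d => d.toProd.1) := by
    rw [← List.count_pos_iff]; rw [hfst v]; omega
  have hvs : v ∈ p.darts.map (fun d => d.toProd.2) := by
    rw [← List.count_pos_iff]; rw [hsnd v]; omega
  obtain ⟨df, hdf, hdf1⟩ := List.mem_map.1 hvf
  obtain ⟨ds, hds, hds2⟩ := List.mem_map.1 hvs
  have hedges : p.edges = p.darts.map SimpleGraph.Dart.edge := rfl
  have hdfedge : df.edge = s(v, df.toProd.2) := by
    rw [← hdf1]; rfl
  have hdsedge : ds.edge = s(v, ds.toProd.1) := by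
    rw [← hds2, Sym2.eq_swap]; rfl
  refine ⟨df.toProd.2, ds.toProd.1, ?_, ?_, ?_, ?_⟩
  · intro hcon
    have hdfs : df ≠ ds := by
      intro h
      have hadj := df.adj
      apply hadj.ne
      rw [hcon, h]
    have h2 : 2 ≤ (p.darts.map SimpleGraph.Dart.edge).count df.edge :=
      two_le_count_map hdf hds hdfs (by rw [hdfedge, hdsedge, hcon])
    rw [← hedges] at h2
    have := hp.isCycle.isCircuit.isTrail.edges_nodup
    have := List.nodup_iff_count_le_one.1 this df.edge
    omega
  · rw [← hdfedge, hedges]; exact List.mem_map_of_mem hdf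
  · rw [← hdsedge, hedges]; exact List.mem_map_of_mem hds
  · intro c hc
    rw [hedges] at hc
    obtain ⟨dt, hdt, hdte⟩ := List.mem_map.1 hc
    have : dt.edge = s(dt.toProd.1, dt.toProd.2) := rfl
    rw [this, Sym2.eq_iff] at hdte
    rcases hdte with ⟨h1, h2⟩ | ⟨h1, h2⟩
    · left
      by_contra hcon
      have hne : dt ≠ df := by
        intro h; exact hcon (by rw [← h2, h])
      have h2le := two_le_count_map hdt hdf hne (f := fun d => d.toProd.1) (by simp [h1, hdf1])
      have h2le' : 2 ≤ (p.darts.map (fun d => d.toProd.1)).count v := by simpa [h1] using h2le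
      have := hfst v
      omega
    · right
      by_contra hcon
      have hne : dt ≠ ds := by
        intro h; exact hcon (by rw [← h1, h])
      have h2le := two_le_count_map hdt hds hne (f := fun d => d.toProd.2) (by simp [h2, hds2])
      have h2le' : 2 ≤ (p.darts.map (fun d => d.toProd.2)).count v := by simpa [h2] using h2le
      have := hsnd v
      omega

end Auxiliary
private lemma repC_natCast (d a : ℕ) :
    repC d ((a : ℕ) : ZMod (d + 12)) = if a % (d + 12) = 0 then d + 12 else a % (d + 12) := by
  unfold repC
  rw [ZMod.val_natCast]
  congr 1
  simp [ZMod.natCast_eq_zero_iff, Nat.dvd_iff_mod_eq_zero]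

private lemma mem_Hface {d i : ℕ} (x : ℕ) (hi1 : 1 ≤ i) (hi2 : i ≤ d + 12) :
    x ∈ Hface d i ↔ ((i ≤ x ∧ x ≤ i + d ∧ x ≤ d + 12) ∨ (1 ≤ x ∧ x + 12 ≤ i)) := by
  unfold Hface
  simp only [Finset.mem_image, Finset.mem_range]
  constructor
  · rintro ⟨j, hj, rfl⟩
    rw [← Nat.cast_add, repC_natCast]
    have hmod : (i + j) % (d + 12) = if i + j < d + 12 then i + j else i + j - (d + 12) := by
      split_ifs with h
      · exact Nat.mod_eq_of_lt h
      · rw [Nat.mod_eq_sub_mod (by omega), Nat.mod_eq_of_lt (by omega)]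
    rw [hmod]
    split_ifs <;> omega
  · rintro (⟨h1, h2, h3⟩ | ⟨h1, h2⟩)
    · refine ⟨x - i, by omega, ?_⟩
      have hix : i + (x - i) = x := by omega
      rw [← Nat.cast_add, hix, repC_natCast]
      have hmod : x % (d + 12) = if x < d + 12 then x else 0 := by
        split_ifs with h
        · exact Nat.mod_eq_of_lt h
        · have : x = d + 12 := by omega
          simp [this]
      rw [hmod]
      split_ifs <;> omega
    · refine ⟨x + (d + 12) - i, by omega, ?_⟩
      have hix : i + (x + (d + 12) - i) = x + (d + 12) := by omega
      rw [← Nat.cast_add, hix, repC_natCast, Nat.add_mod_right, Nat.mod_eq_of_lt (by omega)]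
      split_ifs <;> omega

private lemma mem_Fone {d x : ℕ} : x ∈ Fone d ↔ x = 1 ∨ x = 5 ∨ (7 ≤ x ∧ x ≤ d + 5) := by
  simp [Fone, Finset.mem_insert, Finset.mem_Icc]

private lemma mem_Ftwo {d x : ℕ} : x ∈ Ftwo d ↔ x = 1 ∨ x = d + 7 ∨ (7 ≤ x ∧ x ≤ d + 5) := by
  simp [Ftwo, Finset.mem_insert, Finset.mem_Icc]

private lemma mem_Fthree {d x : ℕ} : x ∈ Fthree d ↔ x = 2 ∨ x = 8 ∨ (10 ≤ x ∧ x ≤ d + 8) := by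
  simp [Fthree, Finset.mem_insert, Finset.mem_Icc]

private lemma mem_Ffour {d x : ℕ} : x ∈ Ffour d ↔ x = 2 ∨ x = d + 10 ∨ (10 ≤ x ∧ x ≤ d + 8) := by
  simp [Ffour, Finset.mem_insert, Finset.mem_Icc]

private lemma mem_facetsC {d : ℕ} {B : Finset ℕ} (h : B ∈ facetsC d) :
    (∃ i, 1 ≤ i ∧ i ≤ d + 12 ∧ B = Hface d i) ∨
      B = Fone d ∨ B = Ftwo d ∨ B = Fthree d ∨ B = Ffour d := by
  simp only [facetsC, Finset.mem_union, Finset.mem_image, Finset.mem_Icc, Finset.mem_insert,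
    Finset.mem_singleton] at h
  rcases h with ⟨i, ⟨hi1, hi2⟩, rfl⟩ | h
  · exact Or.inl ⟨i, hi1, hi2, rfl⟩
  · tauto

private lemma nbr_H6 {d : ℕ} (hd : 2 ≤ d) {B : Finset ℕ} (hB : B ∈ facetsC d)
    (hne : B ≠ Hface d 6) (hcard : (Hface d 6 ∩ B).card = d) :
    B = Hface d 5 ∨ B = Hface d 7 := by
  have h6 : ∀ x, x ∈ Hface d 6 ↔ 6 ≤ x ∧ x ≤ d + 6 := by
    intro x; rw [mem_Hface x (by omega) (by omega)]; omega
  rcases mem_facetsC hB with ⟨i, hi1, hi2, rfl⟩ | rfl | rfl | rfl | rfl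
  · rcases eq_or_ne i 5 with rfl | hi5
    · exact Or.inl rfl
    rcases eq_or_ne i 7 with rfl | hi7
    · exact Or.inr rfl
    rcases eq_or_ne i 6 with rfl | hi6
    · exact absurd rfl hne
    exfalso
    have hsub : Hface d 6 ∩ Hface d i ⊆
        Finset.Icc (max 6 i) (min (d + 6) (i + d)) ∪ Finset.Icc 6 (i - 12) := by
      intro x hx
      rw [Finset.mem_inter] at hx
      obtain ⟨hx1, hx2⟩ := hx
      rw [h6] at hx1
      rw [mem_Hface x hi1 hi2] at hx2
      simp only [Finset.mem_union, Finset.mem_Icc]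
      omega
    have hc1 := Finset.card_le_card hsub
    have hc2 := Finset.card_union_le (Finset.Icc (max 6 i) (min (d + 6) (i + d)))
      (Finset.Icc 6 (i - 12))
    rw [Nat.card_Icc, Nat.card_Icc] at hc2
    omega
  · exfalso
    have hsub : Hface d 6 ∩ Fone d ⊆ Finset.Icc 7 (d + 5) := by
      intro x hx
      rw [Finset.mem_inter, h6 x, mem_Fone] at hx
      rw [Finset.mem_Icc]; omega
    have hc1 := Finset.card_le_card hsub
    rw [Nat.card_Icc] at hc1
    omega
  · exfalso
    have hsub : Hface d 6 ∩ Ftwo d ⊆ Finset.Icc 7 (d + 5) := by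
      intro x hx
      rw [Finset.mem_inter, h6 x, mem_Ftwo] at hx
      rw [Finset.mem_Icc]; omega
    have hc1 := Finset.card_le_card hsub
    rw [Nat.card_Icc] at hc1
    omega
  · exfalso
    have hsub : Hface d 6 ∩ Fthree d ⊆ insert 8 (Finset.Icc 10 (d + 6)) := by
      intro x hx
      rw [Finset.mem_inter, h6 x, mem_Fthree] at hx
      rw [Finset.mem_insert, Finset.mem_Icc]; omega
    have hc1 := Finset.card_le_card hsub
    have hc2 := Finset.card_insert_le 8 (Finset.Icc 10 (d + 6))
    rw [Nat.card_Icc] at hc2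
    omega
  · exfalso
    have hsub : Hface d 6 ∩ Ffour d ⊆ Finset.Icc 10 (d + 6) := by
      intro x hx
      rw [Finset.mem_inter, h6 x, mem_Ffour] at hx
      rw [Finset.mem_Icc]; omega
    have hc1 := Finset.card_le_card hsub
    rw [Nat.card_Icc] at hc1
    omega

private lemma nbr_F1 {d : ℕ} (hd : 2 ≤ d) {B : Finset ℕ} (hB : B ∈ facetsC d)
    (hne : B ≠ Fone d) (hcard : (Fone d ∩ B).card = d) :
    B = Ftwo d ∨ B = Hface d 5 := by
  rcases mem_facetsC hB with ⟨i, hi1, hi2, rfl⟩ | rfl | rfl | rfl | rfl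
  · rcases eq_or_ne i 5 with rfl | hi5
    · exact Or.inr rfl
    exfalso
    by_cases h13 : 13 ≤ i
    · have hsub : Fone d ∩ Hface d i ⊆
          insert 1 (Finset.Icc 5 (i - 12) ∪ Finset.Icc i (d + 5)) := by
        intro x hx
        rw [Finset.mem_inter] at hx
        obtain ⟨hx1, hx2⟩ := hx
        rw [mem_Fone] at hx1
        rw [mem_Hface x hi1 hi2] at hx2
        simp only [Finset.mem_insert, Finset.mem_union, Finset.mem_Icc]
        omega
      have hc1 := Finset.card_le_card hsub
      have hc2 := Finset.card_insert_le 1 (Finset.Icc 5 (i - 12) ∪ Finset.Icc i (d + 5))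
      have hc3 := Finset.card_union_le (Finset.Icc 5 (i - 12)) (Finset.Icc i (d + 5))
      rw [Nat.card_Icc, Nat.card_Icc] at hc3
      omega
    rcases eq_or_ne i 1 with rfl | hi1'
    · have hsub : Fone d ∩ Hface d 1 ⊆ insert 1 (Finset.Icc 5 (d + 1)) := by
        intro x hx
        rw [Finset.mem_inter] at hx
        obtain ⟨hx1, hx2⟩ := hx
        rw [mem_Fone] at hx1
        rw [mem_Hface x (by omega) (by omega)] at hx2
        simp only [Finset.mem_insert, Finset.mem_Icc]
        omega
      have hc1 := Finset.card_le_card hsub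
      have hc2 := Finset.card_insert_le 1 (Finset.Icc 5 (d + 1))
      rw [Nat.card_Icc] at hc2
      omega
    by_cases h24 : i ≤ 4
    · have hsub : Fone d ∩ Hface d i ⊆ insert 5 (Finset.Icc 7 (i + d)) := by
        intro x hx
        rw [Finset.mem_inter] at hx
        obtain ⟨hx1, hx2⟩ := hx
        rw [mem_Fone] at hx1
        rw [mem_Hface x hi1 hi2] at hx2
        simp only [Finset.mem_insert, Finset.mem_Icc]
        omega
      have hc1 := Finset.card_le_card hsub
      have hc2 := Finset.card_insert_le 5 (Finset.Icc 7 (i + d))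
      rw [Nat.card_Icc] at hc2
      omega
    · -- 6 ≤ i ≤ 12, i ≠ 5
      have hsub : Fone d ∩ Hface d i ⊆ Finset.Icc (max 7 i) (d + 5) := by
        intro x hx
        rw [Finset.mem_inter] at hx
        obtain ⟨hx1, hx2⟩ := hx
        rw [mem_Fone] at hx1
        rw [mem_Hface x hi1 hi2] at hx2
        simp only [Finset.mem_Icc]
        omega
      have hc1 := Finset.card_le_card hsub
      rw [Nat.card_Icc] at hc1
      omega
  · exact absurd rfl hne
  · exact Or.inl rfl
  · exfalso
    have hsub : Fone d ∩ Fthree d ⊆ insert 8 (Finset.Icc 10 (d + 5)) := by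
      intro x hx
      rw [Finset.mem_inter, mem_Fone, mem_Fthree] at hx
      simp only [Finset.mem_insert, Finset.mem_Icc]
      omega
    have hc1 := Finset.card_le_card hsub
    have hc2 := Finset.card_insert_le 8 (Finset.Icc 10 (d + 5))
    rw [Nat.card_Icc] at hc2
    omega
  · exfalso
    have hsub : Fone d ∩ Ffour d ⊆ Finset.Icc 10 (d + 5) := by
      intro x hx
      rw [Finset.mem_inter, mem_Fone, mem_Ffour] at hx
      simp only [Finset.mem_Icc]
      omega
    have hc1 := Finset.card_le_card hsub
    rw [Nat.card_Icc] at hc1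
    omega

private lemma nbr_F2 {d : ℕ} (hd : 2 ≤ d) {B : Finset ℕ} (hB : B ∈ facetsC d)
    (hne : B ≠ Ftwo d) (hcard : (Ftwo d ∩ B).card = d) :
    B = Fone d ∨ B = Hface d 7 := by
  rcases mem_facetsC hB with ⟨i, hi1, hi2, rfl⟩ | rfl | rfl | rfl | rfl
  · rcases eq_or_ne i 7 with rfl | hi7
    · exact Or.inr rfl
    exfalso
    by_cases h13 : 13 ≤ i
    · have hsub : Ftwo d ∩ Hface d i ⊆
          insert 1 (Finset.Icc i (d + 7) ∪ Finset.Icc 7 (i - 12)) := by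
        intro x hx
        rw [Finset.mem_inter] at hx
        obtain ⟨hx1, hx2⟩ := hx
        rw [mem_Ftwo] at hx1
        rw [mem_Hface x hi1 hi2] at hx2
        simp only [Finset.mem_insert, Finset.mem_union, Finset.mem_Icc]
        omega
      have hc1 := Finset.card_le_card hsub
      have hc2 := Finset.card_insert_le 1 (Finset.Icc i (d + 7) ∪ Finset.Icc 7 (i - 12))
      have hc3 := Finset.card_union_le (Finset.Icc i (d + 7)) (Finset.Icc 7 (i - 12))
      rw [Nat.card_Icc, Nat.card_Icc] at hc3
      omega
    rcases eq_or_ne i 1 with rfl | hi1'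
    · have hsub : Ftwo d ∩ Hface d 1 ⊆ insert 1 (Finset.Icc 7 (d + 1)) := by
        intro x hx
        rw [Finset.mem_inter] at hx
        obtain ⟨hx1, hx2⟩ := hx
        rw [mem_Ftwo] at hx1
        rw [mem_Hface x (by omega) (by omega)] at hx2
        simp only [Finset.mem_insert, Finset.mem_Icc]
        omega
      have hc1 := Finset.card_le_card hsub
      have hc2 := Finset.card_insert_le 1 (Finset.Icc 7 (d + 1))
      rw [Nat.card_Icc] at hc2
      omega
    by_cases h26 : i ≤ 6
    · have hsub : Ftwo d ∩ Hface d i ⊆ Finset.Icc 7 (d + 5) := by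
        intro x hx
        rw [Finset.mem_inter] at hx
        obtain ⟨hx1, hx2⟩ := hx
        rw [mem_Ftwo] at hx1
        rw [mem_Hface x hi1 hi2] at hx2
        simp only [Finset.mem_Icc]
        omega
      have hc1 := Finset.card_le_card hsub
      rw [Nat.card_Icc] at hc1
      omega
    · -- 8 ≤ i ≤ 12
      have hsub : Ftwo d ∩ Hface d i ⊆ insert (d + 7) (Finset.Icc i (d + 5)) := by
        intro x hx
        rw [Finset.mem_inter] at hx
        obtain ⟨hx1, hx2⟩ := hx
        rw [mem_Ftwo] at hx1
        rw [mem_Hface x hi1 hi2] at hx2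
        simp only [Finset.mem_insert, Finset.mem_Icc]
        omega
      have hc1 := Finset.card_le_card hsub
      have hc2 := Finset.card_insert_le (d + 7) (Finset.Icc i (d + 5))
      rw [Nat.card_Icc] at hc2
      omega
  · exact Or.inl rfl
  · exact absurd rfl hne
  · exfalso
    have hsub : Ftwo d ∩ Fthree d ⊆ insert (d + 7) (Finset.Icc 8 (d + 5)) := by
      intro x hx
      rw [Finset.mem_inter, mem_Ftwo, mem_Fthree] at hx
      simp only [Finset.mem_insert, Finset.mem_Icc]
      omega
    have hc1 := Finset.card_le_card hsub
    have hc2 := Finset.card_insert_le (d + 7) (Finset.Icc 8 (d + 5))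
    rw [Nat.card_Icc] at hc2
    omega
  · exfalso
    have hsub : Ftwo d ∩ Ffour d ⊆ insert (d + 7) (Finset.Icc 10 (d + 5)) := by
      intro x hx
      rw [Finset.mem_inter, mem_Ftwo, mem_Ffour] at hx
      simp only [Finset.mem_insert, Finset.mem_Icc]
      omega
    have hc1 := Finset.card_le_card hsub
    have hc2 := Finset.card_insert_le (d + 7) (Finset.Icc 10 (d + 5))
    rw [Nat.card_Icc] at hc2
    omega

private lemma dual_adj {d : ℕ} {u w : {F : Finset ℕ // F ∈ facetsC d}}
    (h : (dualGraphC d).Adj u w) :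
    u ≠ w ∧ ((u : Finset ℕ) ∩ (w : Finset ℕ)).card = d := h

/-- For every `d ≥ 2`, the dual graph `G_d` of `C_d` has no Hamiltonian cycle. -/
theorem Cd_dual_not_hamiltonian (d : ℕ) (hd : 2 ≤ d) :
    ¬ ∃ (A : {F : Finset ℕ // F ∈ facetsC d}) (p : (dualGraphC d).Walk A A),
      p.IsHamiltonianCycle := by
  classical
  rintro ⟨A, p, hp⟩
  have hHmem : ∀ i, 1 ≤ i → i ≤ d + 12 → Hface d i ∈ facetsC d := by
    intro i h1 h2
    exact Finset.mem_union_left _ (Finset.mem_image.2 ⟨i, Finset.mem_Icc.2 ⟨h1, h2⟩, rfl⟩)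
  have hF1mem : Fone d ∈ facetsC d := Finset.mem_union_right _ (by simp)
  have hF2mem : Ftwo d ∈ facetsC d := Finset.mem_union_right _ (by simp)
  have hF3mem : Fthree d ∈ facetsC d := Finset.mem_union_right _ (by simp)
  let V := {F : Finset ℕ // F ∈ facetsC d}
  let vH5 : V := ⟨Hface d 5, hHmem 5 (by omega) (by omega)⟩
  let vH6 : V := ⟨Hface d 6, hHmem 6 (by omega) (by omega)⟩
  let vH7 : V := ⟨Hface d 7, hHmem 7 (by omega) (by omega)⟩
  let vF1 : V := ⟨Fone d, hF1mem⟩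
  let vF2 : V := ⟨Ftwo d, hF2mem⟩
  let vF3 : V := ⟨Fthree d, hF3mem⟩
  -- membership characterizations for distinctness arguments
  have h5c : ∀ x, x ∈ Hface d 5 ↔ 5 ≤ x ∧ x ≤ d + 5 := by
    intro x; rw [mem_Hface x (by omega) (by omega)]; omega
  have h6c : ∀ x, x ∈ Hface d 6 ↔ 6 ≤ x ∧ x ≤ d + 6 := by
    intro x; rw [mem_Hface x (by omega) (by omega)]; omega
  have h7c : ∀ x, x ∈ Hface d 7 ↔ 7 ≤ x ∧ x ≤ d + 7 := by
    intro x; rw [mem_Hface x (by omega) (by omega)]; omega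
  -- distinctness of vertices
  have d57 : vH5 ≠ vH7 := by
    intro h
    have h5in : (5 : ℕ) ∈ Hface d 5 := (h5c 5).2 (by omega)
    have hv : Hface d 5 = Hface d 7 := congrArg Subtype.val h
    rw [hv, h7c 5] at h5in
    omega
  have d25 : vF2 ≠ vH5 := by
    intro h
    have h1in : (1 : ℕ) ∈ Ftwo d := mem_Ftwo.2 (Or.inl rfl)
    have hv : Ftwo d = Hface d 5 := congrArg Subtype.val h
    rw [hv, h5c 1] at h1in
    omega
  have d17 : vF1 ≠ vH7 := by
    intro h
    have h1in : (1 : ℕ) ∈ Fone d := mem_Fone.2 (Or.inl rfl)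
    have hv : Fone d = Hface d 7 := congrArg Subtype.val h
    rw [hv, h7c 1] at h1in
    omega
  have d61 : vH6 ≠ vF1 := by
    intro h
    have h6in : (6 : ℕ) ∈ Hface d 6 := (h6c 6).2 (by omega)
    have hv : Hface d 6 = Fone d := congrArg Subtype.val h
    rw [hv, mem_Fone] at h6in
    omega
  have d62 : vH6 ≠ vF2 := by
    intro h
    have h6in : (6 : ℕ) ∈ Hface d 6 := (h6c 6).2 (by omega)
    have hv : Hface d 6 = Ftwo d := congrArg Subtype.val h
    rw [hv, mem_Ftwo] at h6in
    omega
  -- the two forced edges at H6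
  obtain ⟨x6, y6, hxy6, hx6, hy6, hu6⟩ := ham_two_edges hp vH6
  have hx6' : x6 = vH5 ∨ x6 = vH7 := by
    have h := dual_adj (p.adj_of_mem_edges hx6)
    have hres := nbr_H6 hd x6.2 (fun hh => h.1 (Subtype.ext hh.symm)) h.2
    rcases hres with h' | h'
    · exact Or.inl (Subtype.ext h')
    · exact Or.inr (Subtype.ext h')
  have hy6' : y6 = vH5 ∨ y6 = vH7 := by
    have h := dual_adj (p.adj_of_mem_edges hy6)
    have hres := nbr_H6 hd y6.2 (fun hh => h.1 (Subtype.ext hh.symm)) h.2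
    rcases hres with h' | h'
    · exact Or.inl (Subtype.ext h')
    · exact Or.inr (Subtype.ext h')
  have e65 : s(vH6, vH5) ∈ p.edges ∧ s(vH6, vH7) ∈ p.edges := by
    rcases hx6' with rfl | rfl <;> rcases hy6' with rfl | rfl
    · exact absurd rfl hxy6
    · exact ⟨hx6, hy6⟩
    · exact ⟨hy6, hx6⟩
    · exact absurd rfl hxy6
  -- the two forced edges at F1
  obtain ⟨x1, y1, hxy1, hx1, hy1, hu1⟩ := ham_two_edges hp vF1
  have hx1' : x1 = vF2 ∨ x1 = vH5 := by
    have h := dual_adj (p.adj_of_mem_edges hx1)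
    have hres := nbr_F1 hd x1.2 (fun hh => h.1 (Subtype.ext hh.symm)) h.2
    rcases hres with h' | h'
    · exact Or.inl (Subtype.ext h')
    · exact Or.inr (Subtype.ext h')
  have hy1' : y1 = vF2 ∨ y1 = vH5 := by
    have h := dual_adj (p.adj_of_mem_edges hy1)
    have hres := nbr_F1 hd y1.2 (fun hh => h.1 (Subtype.ext hh.symm)) h.2
    rcases hres with h' | h'
    · exact Or.inl (Subtype.ext h')
    · exact Or.inr (Subtype.ext h')
  have e12 : s(vF1, vF2) ∈ p.edges ∧ s(vF1, vH5) ∈ p.edges := by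
    rcases hx1' with rfl | rfl <;> rcases hy1' with rfl | rfl
    · exact absurd rfl hxy1
    · exact ⟨hx1, hy1⟩
    · exact ⟨hy1, hx1⟩
    · exact absurd rfl hxy1
  -- the two forced edges at F2
  obtain ⟨x2, y2, hxy2, hx2, hy2, hu2⟩ := ham_two_edges hp vF2
  have hx2' : x2 = vF1 ∨ x2 = vH7 := by
    have h := dual_adj (p.adj_of_mem_edges hx2)
    have hres := nbr_F2 hd x2.2 (fun hh => h.1 (Subtype.ext hh.symm)) h.2
    rcases hres with h' | h'
    · exact Or.inl (Subtype.ext h')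
    · exact Or.inr (Subtype.ext h')
  have hy2' : y2 = vF1 ∨ y2 = vH7 := by
    have h := dual_adj (p.adj_of_mem_edges hy2)
    have hres := nbr_F2 hd y2.2 (fun hh => h.1 (Subtype.ext hh.symm)) h.2
    rcases hres with h' | h'
    · exact Or.inl (Subtype.ext h')
    · exact Or.inr (Subtype.ext h')
  have e27 : s(vF2, vF1) ∈ p.edges ∧ s(vF2, vH7) ∈ p.edges := by
    rcases hx2' with rfl | rfl <;> rcases hy2' with rfl | rfl
    · exact absurd rfl hxy2
    · exact ⟨hx2, hy2⟩
    · exact ⟨hy2, hx2⟩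
    · exact absurd rfl hxy2
  -- pinning the edges at H5
  obtain ⟨x5, y5, hxy5, hx5, hy5, hu5⟩ := ham_two_edges hp vH5
  have h56 : s(vH5, vH6) ∈ p.edges := by rw [Sym2.eq_swap]; exact e65.1
  have h51 : s(vH5, vF1) ∈ p.edges := by rw [Sym2.eq_swap]; exact e12.2
  have pin5 : ∀ c, s(vH5, c) ∈ p.edges → c = vH6 ∨ c = vF1 := by
    intro c hc
    have hA := hu5 vH6 h56
    have hB := hu5 vF1 h51
    have hgoal := hu5 c hc
    rcases hA with hA | hA <;> rcases hB with hB | hB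
    · exact absurd (hA.trans hB.symm) d61
    · rcases hgoal with rfl | rfl
      · exact Or.inl hA.symm
      · exact Or.inr hB.symm
    · rcases hgoal with rfl | rfl
      · exact Or.inr hB.symm
      · exact Or.inl hA.symm
    · exact absurd (hA.trans hB.symm) d61
  -- pinning the edges at H7
  obtain ⟨x7, y7, hxy7, hx7, hy7, hu7⟩ := ham_two_edges hp vH7
  have h76 : s(vH7, vH6) ∈ p.edges := by rw [Sym2.eq_swap]; exact e65.2
  have h72 : s(vH7, vF2) ∈ p.edges := by rw [Sym2.eq_swap]; exact e27.2
  have pin7 : ∀ c, s(vH7, c) ∈ p.edges → c = vH6 ∨ c = vF2 := by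
    intro c hc
    have hA := hu7 vH6 h76
    have hB := hu7 vF2 h72
    have hgoal := hu7 c hc
    rcases hA with hA | hA <;> rcases hB with hB | hB
    · exact absurd (hA.trans hB.symm) d62
    · rcases hgoal with rfl | rfl
      · exact Or.inl hA.symm
      · exact Or.inr hB.symm
    · rcases hgoal with rfl | rfl
      · exact Or.inr hB.symm
      · exact Or.inl hA.symm
    · exact absurd (hA.trans hB.symm) d62
  -- the closed region
  let P : V → Prop := fun u => u = vF1 ∨ u = vF2 ∨ u = vH5 ∨ u = vH6 ∨ u = vH7
  have key : ∀ u w : V, s(u, w) ∈ p.edges → P u → P w := by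
    intro u w he hu
    rcases hu with rfl | rfl | rfl | rfl | rfl
    · have h := dual_adj (p.adj_of_mem_edges he)
      have hres := nbr_F1 hd w.2 (fun hh => h.1 (Subtype.ext hh.symm)) h.2
      rcases hres with h' | h'
      · exact Or.inr (Or.inl (Subtype.ext h'))
      · exact Or.inr (Or.inr (Or.inl (Subtype.ext h')))
    · have h := dual_adj (p.adj_of_mem_edges he)
      have hres := nbr_F2 hd w.2 (fun hh => h.1 (Subtype.ext hh.symm)) h.2
      rcases hres with h' | h'
      · exact Or.inl (Subtype.ext h')
      · exact Or.inr (Or.inr (Or.inr (Or.inr (Subtype.ext h'))))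
    · rcases pin5 w he with rfl | rfl
      · exact Or.inr (Or.inr (Or.inr (Or.inl rfl)))
      · exact Or.inl rfl
    · have h := dual_adj (p.adj_of_mem_edges he)
      have hres := nbr_H6 hd w.2 (fun hh => h.1 (Subtype.ext hh.symm)) h.2
      rcases hres with h' | h'
      · exact Or.inr (Or.inr (Or.inl (Subtype.ext h')))
      · exact Or.inr (Or.inr (Or.inr (Or.inr (Subtype.ext h'))))
    · rcases pin7 w he with rfl | rfl
      · exact Or.inr (Or.inr (Or.inr (Or.inl rfl)))
      · exact Or.inr (Or.inl rfl)
  have trans : ∀ (a b : V) (w : (dualGraphC d).Walk a b),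
      (∀ e ∈ w.edges, e ∈ p.edges) → (P a ↔ P b) := by
    intro a b w
    induction w with
    | nil => exact fun _ => Iff.rfl
    | @cons a c b hadj q ih =>
      intro hsub
      have he : s(a, c) ∈ p.edges := hsub _ (by
        rw [SimpleGraph.Walk.edges_cons]; exact List.mem_cons_self)
      have hq : ∀ e ∈ q.edges, e ∈ p.edges := fun e hee => hsub e (by
        rw [SimpleGraph.Walk.edges_cons]; exact List.mem_cons_of_mem _ hee)
      constructor
      · intro hPa
        exact (ih hq).1 (key a c he hPa)
      · intro hPb
        exact key c a (by rwa [Sym2.eq_swap]) ((ih hq).2 hPb)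
  have hPA : P A := by
    have hmem := hp.mem_support vF1
    have ht := trans A vF1 (p.takeUntil vF1 hmem)
      (fun e he => p.edges_takeUntil_subset hmem he)
    exact ht.2 (Or.inl rfl)
  have hPF3 : P vF3 := by
    have hmem := hp.mem_support vF3
    have ht := trans A vF3 (p.takeUntil vF3 hmem)
      (fun e he => p.edges_takeUntil_subset hmem he)
    exact ht.1 hPA
  have h2in : (2 : ℕ) ∈ Fthree d := mem_Fthree.2 (Or.inl rfl)
  rcases hPF3 with h | h | h | h | h
  · have hv : Fthree d = Fone d := congrArg Subtype.val h
    rw [hv, mem_Fone] at h2in; omega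
  · have hv : Fthree d = Ftwo d := congrArg Subtype.val h
    rw [hv, mem_Ftwo] at h2in; omega
  · have hv : Fthree d = Hface d 5 := congrArg Subtype.val h
    rw [hv, h5c 2] at h2in; omega
  · have hv : Fthree d = Hface d 6 := congrArg Subtype.val h
    rw [hv, h6c 2] at h2in; omega
  · have hv : Fthree d = Hface d 7 := congrArg Subtype.val h
    rw [hv, h7c 2] at h2in; omega
end

section
/- For every integer d ≥ 2, the dual graph G_d of the complex C_d admits a Hamiltonian path (a path visiting every vertex of G_d exactly once). -/
namespace CdHam
open Finset

lemma repC_injective (d : ℕ) : Function.Injective (repC d) := by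
  intro x y h
  unfold repC at h
  split_ifs at h with hx hy hy
  · exact hx.trans hy.symm
  · exact absurd h.symm (Nat.ne_of_lt (ZMod.val_lt y))
  · exact absurd h (Nat.ne_of_lt (ZMod.val_lt x))
  · exact ZMod.val_injective _ h

lemma repC_natCast (d : ℕ) {k : ℕ} (h1 : 1 ≤ k) (h2 : k ≤ d + 12) :
    repC d (k : ZMod (d + 12)) = k := by
  rcases eq_or_lt_of_le h2 with h | h
  · subst h; simp [repC, ZMod.natCast_self]
  · have hv : ((k : ZMod (d + 12))).val = k := ZMod.val_cast_of_lt h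
    have hne : (k : ZMod (d + 12)) ≠ 0 := by
      intro e; rw [e, ZMod.val_zero] at hv; omega
    simp [repC, hne, hv]

lemma cast_inj_small (d : ℕ) {a b : ℕ} (ha : a < d + 12) (hb : b < d + 12)
    (h : (a : ZMod (d + 12)) = b) : a = b := by
  rw [ZMod.natCast_eq_natCast_iff'] at h
  rwa [Nat.mod_eq_of_lt ha, Nat.mod_eq_of_lt hb] at h

/-- The residue interval underlying `Hface`. -/
def Ires (d : ℕ) (i : ℕ) : Finset (ZMod (d + 12)) :=
  (Finset.range (d + 1)).image (fun j : ℕ => (i : ZMod (d + 12)) + (j : ZMod (d + 12)))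

lemma Hface_eq_image (d i : ℕ) : Hface d i = (Ires d i).image (repC d) := by
  unfold Hface Ires
  rw [Finset.image_image]
  rfl

lemma mem_Ires {d : ℕ} {x : ZMod (d + 12)} {i : ℕ} :
    x ∈ Ires d i ↔ ∃ j : ℕ, j ≤ d ∧ x = (i : ZMod (d + 12)) + (j : ZMod (d + 12)) := by
  unfold Ires
  simp only [Finset.mem_image, Finset.mem_range, Nat.lt_succ_iff]
  constructor
  · rintro ⟨j, hj, he⟩; exact ⟨j, hj, he.symm⟩
  · rintro ⟨j, hj, he⟩; exact ⟨j, hj, he.symm⟩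

lemma self_mem_Ires (d i : ℕ) : (i : ZMod (d + 12)) ∈ Ires d i :=
  mem_Ires.mpr ⟨0, by omega, by simp⟩

lemma pred_not_mem_Ires (d i : ℕ) : (i : ZMod (d + 12)) - 1 ∉ Ires d i := by
  rw [mem_Ires]
  rintro ⟨j, hj, he⟩
  have h1 : ((j + 1 : ℕ) : ZMod (d + 12)) = 0 := by
    push_cast
    have : (j : ZMod (d + 12)) = -1 := by
      have := he.symm
      rw [sub_eq_add_neg] at this
      exact add_left_cancel this
    rw [this]; ring
  rw [ZMod.natCast_eq_zero_iff] at h1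
  have := Nat.le_of_dvd (by omega) h1
  omega

lemma succ_mem_Ires {d i : ℕ} {x : ZMod (d + 12)} (hx : x ∈ Ires d i)
    (hne : x ≠ (i : ZMod (d + 12)) + (d : ZMod (d + 12))) : x + 1 ∈ Ires d i := by
  rw [mem_Ires] at hx ⊢
  obtain ⟨j, hj, he⟩ := hx
  have hjd : j ≠ d := by rintro rfl; exact hne he
  exact ⟨j + 1, by omega, by rw [he]; push_cast; ring⟩

lemma Ires_inj {d i j : ℕ} (h : Ires d i = Ires d j) :
    (i : ZMod (d + 12)) = (j : ZMod (d + 12)) := by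
  by_contra hne
  have hj : (j : ZMod (d + 12)) ∈ Ires d i := h ▸ self_mem_Ires d j
  rw [mem_Ires] at hj
  obtain ⟨a, ha, he⟩ := hj
  have ha0 : a ≠ 0 := by rintro rfl; simp at he; exact hne he.symm
  have hmem : (j : ZMod (d + 12)) - 1 ∈ Ires d i := by
    rw [mem_Ires]
    refine ⟨a - 1, by omega, ?_⟩
    have : (a : ℕ) = (a - 1) + 1 := by omega
    rw [he, this]
    push_cast
    ring
  rw [h] at hmem
  exact pred_not_mem_Ires d j hmem

lemma card_Ires (d i : ℕ) : (Ires d i).card = d + 1 := by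
  unfold Ires
  rw [Finset.card_image_of_injOn, Finset.card_range]
  intro a ha b hb hab
  simp only [Finset.coe_range, Set.mem_Iio] at ha hb
  exact cast_inj_small d (by omega) (by omega) (add_left_cancel hab)

lemma Ires_inter_succ (d i : ℕ) :
    Ires d i ∩ Ires d (i + 1) =
      (Finset.Icc 1 d).image (fun j : ℕ => (i : ZMod (d + 12)) + (j : ZMod (d + 12))) := by
  ext x
  simp only [Finset.mem_inter, mem_Ires, Finset.mem_image, Finset.mem_Icc]
  constructor
  · rintro ⟨⟨a, ha, hea⟩, ⟨b, hb, heb⟩⟩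
    have : ((a : ℕ) : ZMod (d + 12)) = ((b + 1 : ℕ) : ZMod (d + 12)) := by
      apply add_left_cancel (a := (i : ZMod (d + 12)))
      rw [← hea, heb]; push_cast; ring
    have hab : a = b + 1 := cast_inj_small d (by omega) (by omega) this
    exact ⟨a, ⟨by omega, by omega⟩, hea.symm⟩
  · rintro ⟨j, ⟨hj1, hj2⟩, he⟩
    refine ⟨⟨j, by omega, he.symm⟩, ⟨j - 1, by omega, ?_⟩⟩
    rw [← he]
    have : (j : ℕ) = (j - 1) + 1 := by omega
    rw [this]
    push_cast
    ring

lemma card_Hface (d i : ℕ) : (Hface d i).card = d + 1 := by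
  rw [Hface_eq_image, Finset.card_image_of_injective _ (repC_injective d), card_Ires]

lemma Hface_inter_succ_card (d i : ℕ) : (Hface d i ∩ Hface d (i + 1)).card = d := by
  rw [Hface_eq_image, Hface_eq_image, ← Finset.image_inter _ _ (repC_injective d),
    Ires_inter_succ, Finset.card_image_of_injective _ (repC_injective d),
    Finset.card_image_of_injOn, Nat.card_Icc]
  · omega
  · intro a ha b hb hab
    simp only [Finset.coe_Icc, Set.mem_Icc] at ha hb
    exact cast_inj_small d (by omega) (by omega) (add_left_cancel hab)

lemma Hface_ne_window (d : ℕ) {i j : ℕ} (h1 : i < j) (h2 : j - i < d + 12) :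
    Hface d i ≠ Hface d j := by
  intro he
  rw [Hface_eq_image, Hface_eq_image] at he
  have hI : Ires d i = Ires d j :=
    Finset.image_injective (repC_injective d) he
  have := Ires_inj hI
  rw [ZMod.natCast_eq_natCast_iff, Nat.modEq_iff_dvd' (by omega)] at this
  have := Nat.le_of_dvd (by omega) this
  omega

lemma Hface_congr (d : ℕ) {i j : ℕ} (h : (i : ZMod (d + 12)) = (j : ZMod (d + 12))) :
    Hface d i = Hface d j := by
  unfold Hface; rw [h]

lemma mem_Hface_iff (d : ℕ) {k i : ℕ} (h1 : 1 ≤ k) (h2 : k ≤ d + 12) :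
    k ∈ Hface d i ↔ (k : ZMod (d + 12)) ∈ Ires d i := by
  rw [Hface_eq_image]
  constructor
  · intro hk
    obtain ⟨x, hx, he⟩ := Finset.mem_image.mp hk
    have : repC d x = repC d ((k : ZMod (d + 12))) := by rw [he, repC_natCast d h1 h2]
    rwa [← repC_injective d this]
  · intro hk
    exact Finset.mem_image.mpr ⟨_, hk, repC_natCast d h1 h2⟩

lemma Hface_eq_Icc (d : ℕ) {i : ℕ} (h1 : 1 ≤ i) (h2 : i + d ≤ d + 12) :
    Hface d i = Finset.Icc i (i + d) := by
  ext x
  rw [Finset.mem_Icc]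
  constructor
  · intro hx
    rw [Hface_eq_image] at hx
    obtain ⟨y, hy, he⟩ := Finset.mem_image.mp hx
    obtain ⟨j, hj, hej⟩ := mem_Ires.mp hy
    have : y = ((i + j : ℕ) : ZMod (d + 12)) := by rw [hej]; push_cast; ring
    rw [this, repC_natCast d (by omega) (by omega)] at he
    omega
  · intro hx
    rw [mem_Hface_iff d (by omega) (by omega)]
    rw [mem_Ires]
    exact ⟨x - i, by omega, by
      have : (x : ℕ) = i + (x - i) := by omega
      conv_lhs => rw [this]
      push_cast; ring⟩

lemma Hface_ne_two (d : ℕ) (F : Finset ℕ) {a b : ℕ} (ha1 : 1 ≤ a) (ha2 : a + 1 ≤ d + 12)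
    (hb1 : 1 ≤ b) (hb2 : b + 1 ≤ d + 12) (hab : a ≠ b)
    (haF : a ∈ F) (hbF : b ∈ F) (haF' : a + 1 ∉ F) (hbF' : b + 1 ∉ F) (i : ℕ) :
    Hface d i ≠ F := by
  intro he
  have hkey : ∀ k : ℕ, 1 ≤ k → k + 1 ≤ d + 12 → k ∈ F → k + 1 ∉ F →
      (k : ZMod (d + 12)) = (i : ZMod (d + 12)) + (d : ZMod (d + 12)) := by
    intro k hk1 hk2 hkF hkF'
    have hkH : (k : ZMod (d + 12)) ∈ Ires d i :=
      (mem_Hface_iff d hk1 (by omega)).mp (he ▸ hkF)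
    by_contra hne
    have := succ_mem_Ires hkH hne
    have : (k + 1 : ℕ) ∈ Hface d i := by
      rw [mem_Hface_iff d (by omega) (by omega)]
      push_cast
      exact this
    exact hkF' (he ▸ this)
  have h1 := hkey a ha1 ha2 haF haF'
  have h2 := hkey b hb1 hb2 hbF hbF'
  exact hab (cast_inj_small d (by omega) (by omega) (h1.trans h2.symm))

end CdHam
namespace CdHam
open Finset SimpleGraph

lemma Hface_mem (d i : ℕ) : Hface d i ∈ facetsC d := by
  rcases Nat.eq_zero_or_pos i with h | h
  · subst h
    have hc : ((d + 12 : ℕ) : ZMod (d + 12)) = ((0 : ℕ) : ZMod (d + 12)) := by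
      simp
    rw [facetsC, Finset.mem_union]
    left
    exact Finset.mem_image.mpr ⟨d + 12, by simp, Hface_congr d hc⟩
  · have hmod : (i - 1) % (d + 12) + 1 ≡ i [MOD (d + 12)] := by
      have h2 := Nat.ModEq.add_right 1 (Nat.mod_modEq (i - 1) (d + 12))
      rwa [Nat.sub_add_cancel h] at h2
    have he : Hface d ((i - 1) % (d + 12) + 1) = Hface d i :=
      Hface_congr d ((ZMod.natCast_eq_natCast_iff _ _ _).mpr hmod)
    rw [facetsC, Finset.mem_union]
    left
    refine Finset.mem_image.mpr ⟨(i - 1) % (d + 12) + 1, ?_, he⟩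
    have := Nat.mod_lt (i - 1) (show 0 < d + 12 by omega)
    simp only [Finset.mem_Icc]
    omega

/-- The vertex of the dual graph corresponding to `H_i`. -/
def vH (d i : ℕ) : {F : Finset ℕ // F ∈ facetsC d} := ⟨Hface d i, Hface_mem d i⟩

lemma F_mem (d : ℕ) {F : Finset ℕ}
    (h : F = Fone d ∨ F = Ftwo d ∨ F = Fthree d ∨ F = Ffour d) : F ∈ facetsC d := by
  rw [facetsC, Finset.mem_union]
  right
  simp only [Finset.mem_insert, Finset.mem_singleton]
  tauto

def vF1 (d : ℕ) : {F : Finset ℕ // F ∈ facetsC d} := ⟨Fone d, F_mem d (by tauto)⟩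
def vF2 (d : ℕ) : {F : Finset ℕ // F ∈ facetsC d} := ⟨Ftwo d, F_mem d (by tauto)⟩
def vF3 (d : ℕ) : {F : Finset ℕ // F ∈ facetsC d} := ⟨Fthree d, F_mem d (by tauto)⟩
def vF4 (d : ℕ) : {F : Finset ℕ // F ∈ facetsC d} := ⟨Ffour d, F_mem d (by tauto)⟩

-- distinctness of faces
lemma Hface_ne_Fone (d i : ℕ) : Hface d i ≠ Fone d := by
  refine Hface_ne_two d (Fone d) (a := 1) (b := 5) (by omega) (by omega) (by omega) (by omega)
    (by omega) ?_ ?_ ?_ ?_ i <;> simp [Fone, Finset.mem_Icc] <;> omega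

lemma Hface_ne_Ftwo (d i : ℕ) : Hface d i ≠ Ftwo d := by
  refine Hface_ne_two d (Ftwo d) (a := 1) (b := d + 7) (by omega) (by omega) (by omega)
    (by omega) (by omega) ?_ ?_ ?_ ?_ i <;> simp [Ftwo, Finset.mem_Icc] <;> omega

lemma Hface_ne_Fthree (d i : ℕ) : Hface d i ≠ Fthree d := by
  refine Hface_ne_two d (Fthree d) (a := 2) (b := 8) (by omega) (by omega) (by omega)
    (by omega) (by omega) ?_ ?_ ?_ ?_ i <;> simp [Fthree, Finset.mem_Icc] <;> omega

lemma Hface_ne_Ffour (d i : ℕ) : Hface d i ≠ Ffour d := by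
  refine Hface_ne_two d (Ffour d) (a := 2) (b := d + 10) (by omega) (by omega) (by omega)
    (by omega) (by omega) ?_ ?_ ?_ ?_ i <;> simp [Ffour, Finset.mem_Icc] <;> omega

lemma Fone_ne_Ftwo (d : ℕ) : Fone d ≠ Ftwo d := by
  intro e
  have h5 : (5 : ℕ) ∈ Ftwo d := e ▸ (by simp [Fone])
  simp only [Ftwo, Finset.mem_insert, Finset.mem_Icc] at h5
  omega

lemma Fone_ne_Fthree (d : ℕ) : Fone d ≠ Fthree d := by
  intro e
  have h1 : (1 : ℕ) ∈ Fthree d := e ▸ (by simp [Fone])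
  simp only [Fthree, Finset.mem_insert, Finset.mem_Icc] at h1
  omega

lemma Fone_ne_Ffour (d : ℕ) : Fone d ≠ Ffour d := by
  intro e
  have h1 : (1 : ℕ) ∈ Ffour d := e ▸ (by simp [Fone])
  simp only [Ffour, Finset.mem_insert, Finset.mem_Icc] at h1
  omega

lemma Ftwo_ne_Fthree (d : ℕ) : Ftwo d ≠ Fthree d := by
  intro e
  have h1 : (1 : ℕ) ∈ Fthree d := e ▸ (by simp [Ftwo])
  simp only [Fthree, Finset.mem_insert, Finset.mem_Icc] at h1
  omega

lemma Ftwo_ne_Ffour (d : ℕ) : Ftwo d ≠ Ffour d := by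
  intro e
  have h1 : (1 : ℕ) ∈ Ffour d := e ▸ (by simp [Ftwo])
  simp only [Ffour, Finset.mem_insert, Finset.mem_Icc] at h1
  omega

lemma Fthree_ne_Ffour (d : ℕ) : Fthree d ≠ Ffour d := by
  intro e
  have h8 : (8 : ℕ) ∈ Ffour d := e ▸ (by simp [Fthree])
  simp only [Ffour, Finset.mem_insert, Finset.mem_Icc] at h8
  omega

lemma vH_ne (d : ℕ) {i j : ℕ} (h1 : i < j) (h2 : j - i < d + 12) : vH d i ≠ vH d j :=
  fun e => Hface_ne_window d h1 h2 (congrArg Subtype.val e)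

lemma adj_of (d : ℕ) (A B : {F : Finset ℕ // F ∈ facetsC d})
    (h1 : (A : Finset ℕ) ≠ B) (h2 : ((A : Finset ℕ) ∩ (B : Finset ℕ)).card = d) :
    (dualGraphC d).Adj A B :=
  ⟨fun e => h1 (congrArg Subtype.val e), h2⟩

lemma adjH (d i : ℕ) : (dualGraphC d).Adj (vH d (i + 1)) (vH d i) := by
  refine adj_of d _ _ (Ne.symm (Hface_ne_window d (by omega) (by omega))) ?_
  show (Hface d (i + 1) ∩ Hface d i).card = d
  rw [Finset.inter_comm]
  exact Hface_inter_succ_card d i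

end CdHam
namespace CdHam
open Finset SimpleGraph

-- vertex inequality helpers
lemma vH_ne_vF1 (d i : ℕ) : vH d i ≠ vF1 d := fun e => Hface_ne_Fone d i (congrArg Subtype.val e)
lemma vH_ne_vF2 (d i : ℕ) : vH d i ≠ vF2 d := fun e => Hface_ne_Ftwo d i (congrArg Subtype.val e)
lemma vH_ne_vF3 (d i : ℕ) : vH d i ≠ vF3 d := fun e => Hface_ne_Fthree d i (congrArg Subtype.val e)
lemma vH_ne_vF4 (d i : ℕ) : vH d i ≠ vF4 d := fun e => Hface_ne_Ffour d i (congrArg Subtype.val e)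
lemma vF1_ne_vF2 (d : ℕ) : vF1 d ≠ vF2 d := fun e => Fone_ne_Ftwo d (congrArg Subtype.val e)
lemma vF1_ne_vF3 (d : ℕ) : vF1 d ≠ vF3 d := fun e => Fone_ne_Fthree d (congrArg Subtype.val e)
lemma vF1_ne_vF4 (d : ℕ) : vF1 d ≠ vF4 d := fun e => Fone_ne_Ffour d (congrArg Subtype.val e)
lemma vF2_ne_vF3 (d : ℕ) : vF2 d ≠ vF3 d := fun e => Ftwo_ne_Fthree d (congrArg Subtype.val e)
lemma vF2_ne_vF4 (d : ℕ) : vF2 d ≠ vF4 d := fun e => Ftwo_ne_Ffour d (congrArg Subtype.val e)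
lemma vF3_ne_vF4 (d : ℕ) : vF3 d ≠ vF4 d := fun e => Fthree_ne_Ffour d (congrArg Subtype.val e)

-- the specific adjacencies
lemma adj_7_F2 (d : ℕ) (hd : 2 ≤ d) : (dualGraphC d).Adj (vH d 7) (vF2 d) := by
  refine adj_of d _ _ (Hface_ne_Ftwo d 7) ?_
  show (Hface d 7 ∩ Ftwo d).card = d
  rw [Hface_eq_Icc d (by omega) (by omega)]
  have h : Finset.Icc 7 (7 + d) ∩ Ftwo d = insert (d + 7) (Finset.Icc 7 (d + 5)) := by
    ext x
    simp only [Finset.mem_inter, Finset.mem_Icc, Ftwo, Finset.mem_insert]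
    omega
  rw [h, Finset.card_insert_of_notMem (by simp only [Finset.mem_Icc]; omega), Nat.card_Icc]
  omega

lemma adj_F2_F1 (d : ℕ) (hd : 2 ≤ d) : (dualGraphC d).Adj (vF2 d) (vF1 d) := by
  refine adj_of d _ _ (Ne.symm (Fone_ne_Ftwo d)) ?_
  show (Ftwo d ∩ Fone d).card = d
  have h : Ftwo d ∩ Fone d = insert 1 (Finset.Icc 7 (d + 5)) := by
    ext x
    simp only [Finset.mem_inter, Finset.mem_Icc, Fone, Ftwo, Finset.mem_insert]
    omega
  rw [h, Finset.card_insert_of_notMem (by simp only [Finset.mem_Icc]; omega), Nat.card_Icc]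
  omega

lemma Hface_chain_top (d : ℕ) : Hface d (10 + (d + 7)) = Hface d 5 := by
  refine Hface_congr d ((ZMod.natCast_eq_natCast_iff _ _ _).mpr ?_)
  show (10 + (d + 7)) % (d + 12) = 5 % (d + 12)
  rw [show 10 + (d + 7) = 5 + (d + 12) from by omega, Nat.add_mod_right]

lemma adj_F1_H5 (d : ℕ) (hd : 2 ≤ d) : (dualGraphC d).Adj (vF1 d) (vH d (10 + (d + 7))) := by
  refine adj_of d _ _ (Ne.symm (Hface_ne_Fone d _)) ?_
  show (Fone d ∩ Hface d (10 + (d + 7))).card = d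
  rw [Hface_chain_top, Hface_eq_Icc d (by omega) (by omega)]
  have h : Fone d ∩ Finset.Icc 5 (5 + d) = insert 5 (Finset.Icc 7 (d + 5)) := by
    ext x
    simp only [Finset.mem_inter, Finset.mem_Icc, Fone, Finset.mem_insert]
    omega
  rw [h, Finset.card_insert_of_notMem (by simp only [Finset.mem_Icc]; omega), Nat.card_Icc]
  omega

lemma adj_H10_F4 (d : ℕ) (hd : 2 ≤ d) : (dualGraphC d).Adj (vH d 10) (vF4 d) := by
  refine adj_of d _ _ (Hface_ne_Ffour d 10) ?_
  show (Hface d 10 ∩ Ffour d).card = d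
  rw [Hface_eq_Icc d (by omega) (by omega)]
  have h : Finset.Icc 10 (10 + d) ∩ Ffour d = insert (d + 10) (Finset.Icc 10 (d + 8)) := by
    ext x
    simp only [Finset.mem_inter, Finset.mem_Icc, Ffour, Finset.mem_insert]
    omega
  rw [h, Finset.card_insert_of_notMem (by simp only [Finset.mem_Icc]; omega), Nat.card_Icc]
  omega

lemma adj_F4_F3 (d : ℕ) (hd : 2 ≤ d) : (dualGraphC d).Adj (vF4 d) (vF3 d) := by
  refine adj_of d _ _ (Ne.symm (Fthree_ne_Ffour d)) ?_
  show (Ffour d ∩ Fthree d).card = d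
  have h : Ffour d ∩ Fthree d = insert 2 (Finset.Icc 10 (d + 8)) := by
    ext x
    simp only [Finset.mem_inter, Finset.mem_Icc, Fthree, Ffour, Finset.mem_insert]
    omega
  rw [h, Finset.card_insert_of_notMem (by simp only [Finset.mem_Icc]; omega), Nat.card_Icc]
  omega

lemma adj_F3_H8 (d : ℕ) (hd : 2 ≤ d) : (dualGraphC d).Adj (vF3 d) (vH d 8) := by
  refine adj_of d _ _ (Ne.symm (Hface_ne_Fthree d 8)) ?_
  show (Fthree d ∩ Hface d 8).card = d
  rw [Hface_eq_Icc d (by omega) (by omega)]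
  have h : Fthree d ∩ Finset.Icc 8 (8 + d) = insert 8 (Finset.Icc 10 (d + 8)) := by
    ext x
    simp only [Finset.mem_inter, Finset.mem_Icc, Fthree, Finset.mem_insert]
    omega
  rw [h, Finset.card_insert_of_notMem (by simp only [Finset.mem_Icc]; omega), Nat.card_Icc]
  omega

/-- The walk `H_{10+k}, H_{10+k-1}, ..., H_10` in the dual graph. -/
def chainW (d : ℕ) : (k : ℕ) → (dualGraphC d).Walk (vH d (10 + k)) (vH d 10)
  | 0 => SimpleGraph.Walk.nil
  | (k + 1) => SimpleGraph.Walk.cons (adjH d (10 + k)) (chainW d k)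

lemma chain_mem (d : ℕ) (k : ℕ) {v : {F : Finset ℕ // F ∈ facetsC d}} :
    v ∈ (chainW d k).support ↔ ∃ j, j ≤ k ∧ v = vH d (10 + j) := by
  induction k with
  | zero =>
    show v ∈ (SimpleGraph.Walk.nil).support ↔ _
    rw [SimpleGraph.Walk.support_nil]
    simp only [List.mem_singleton]
    constructor
    · intro h; exact ⟨0, le_refl 0, h⟩
    · rintro ⟨j, hj, he⟩; interval_cases j; exact he
  | succ k ih =>
    rw [show chainW d (k + 1) = SimpleGraph.Walk.cons (adjH d (10 + k)) (chainW d k) from rfl,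
      SimpleGraph.Walk.support_cons, List.mem_cons, ih]
    constructor
    · rintro (h | ⟨j, hj, he⟩)
      · exact ⟨k + 1, le_refl _, h⟩
      · exact ⟨j, by omega, he⟩
    · rintro ⟨j, hj, he⟩
      rcases Nat.lt_or_ge j (k + 1) with h | h
      · exact Or.inr ⟨j, by omega, he⟩
      · left; have : j = k + 1 := by omega
        rw [this] at he; exact he

lemma chain_nodup (d : ℕ) (k : ℕ) : k ≤ d + 7 → (chainW d k).support.Nodup := by
  induction k with
  | zero =>
    intro _
    show (SimpleGraph.Walk.nil).support.Nodup
    rw [SimpleGraph.Walk.support_nil]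
    exact List.nodup_singleton _
  | succ k ih =>
    intro hk
    rw [show chainW d (k + 1) = SimpleGraph.Walk.cons (adjH d (10 + k)) (chainW d k) from rfl,
      SimpleGraph.Walk.support_cons]
    refine List.nodup_cons.mpr ⟨?_, ih (by omega)⟩
    rw [chain_mem]
    rintro ⟨j, hj, he⟩
    exact vH_ne d (i := 10 + j) (j := 10 + (k + 1)) (by omega) (by omega) he.symm

end CdHam
open CdHam SimpleGraph in
/-- For every `d ≥ 2`, the dual graph `G_d` of `C_d` admits a Hamiltonian path:
a path visiting every vertex (facet) exactly once. -/
theorem Cd_dual_hamiltonian_path (d : ℕ) (hd : 2 ≤ d) :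
    ∃ (A B : {F : Finset ℕ // F ∈ facetsC d}) (p : (dualGraphC d).Walk A B),
      p.IsHamiltonian := by
  classical
  refine ⟨vH d 6, vH d 9,
    Walk.cons ((adjH d 6).symm)
      (Walk.cons (adj_7_F2 d hd)
        (Walk.cons (adj_F2_F1 d hd)
          (Walk.cons (adj_F1_H5 d hd)
            ((chainW d (d + 7)).append
              (Walk.cons (adj_H10_F4 d hd)
                (Walk.cons (adj_F4_F3 d hd)
                  (Walk.cons (adj_F3_H8 d hd)
                    (Walk.cons ((adjH d 8).symm) Walk.nil)))))))), ?_⟩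
  intro v
  have hsup : (Walk.cons ((adjH d 6).symm)
      (Walk.cons (adj_7_F2 d hd)
        (Walk.cons (adj_F2_F1 d hd)
          (Walk.cons (adj_F1_H5 d hd)
            ((chainW d (d + 7)).append
              (Walk.cons (adj_H10_F4 d hd)
                (Walk.cons (adj_F4_F3 d hd)
                  (Walk.cons (adj_F3_H8 d hd)
                    (Walk.cons ((adjH d 8).symm) Walk.nil))))))))).support
      = vH d 6 :: vH d 7 :: vF2 d :: vF1 d ::
          ((chainW d (d + 7)).support ++ [vF4 d, vF3 d, vH d 8, vH d 9]) := by
    simp only [Walk.support_cons, Walk.support_append, Walk.support_nil, List.tail_cons]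
  rw [hsup]
  have hnd : (vH d 6 :: vH d 7 :: vF2 d :: vF1 d ::
      ((chainW d (d + 7)).support ++ [vF4 d, vF3 d, vH d 8, vH d 9])).Nodup := by
    have hmem : ∀ w : {F : Finset ℕ // F ∈ facetsC d},
        w ∈ (chainW d (d + 7)).support ↔ ∃ j, j ≤ d + 7 ∧ w = vH d (10 + j) :=
      fun w => chain_mem d (d + 7)
    refine List.nodup_cons.mpr ⟨?_, List.nodup_cons.mpr ⟨?_, List.nodup_cons.mpr ⟨?_,
      List.nodup_cons.mpr ⟨?_, List.Nodup.append (chain_nodup d (d + 7) le_rfl) ?_ ?_⟩⟩⟩⟩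
    · -- vH 6 not in rest
      simp only [List.mem_cons, List.mem_append, hmem, List.mem_singleton, List.not_mem_nil, or_false]
      rintro (h | h | h | ⟨j, hj, h⟩ | h | h | h | h)
      · exact vH_ne d (i := 6) (j := 7) (by omega) (by omega) h
      · exact vH_ne_vF2 d 6 h
      · exact vH_ne_vF1 d 6 h
      · exact vH_ne d (i := 6) (j := 10 + j) (by omega) (by omega) h
      · exact vH_ne_vF4 d 6 h
      · exact vH_ne_vF3 d 6 h
      · exact vH_ne d (i := 6) (j := 8) (by omega) (by omega) h
      · exact vH_ne d (i := 6) (j := 9) (by omega) (by omega) h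
    · -- vH 7 not in rest
      simp only [List.mem_cons, List.mem_append, hmem, List.mem_singleton, List.not_mem_nil, or_false]
      rintro (h | h | ⟨j, hj, h⟩ | h | h | h | h)
      · exact vH_ne_vF2 d 7 h
      · exact vH_ne_vF1 d 7 h
      · exact vH_ne d (i := 7) (j := 10 + j) (by omega) (by omega) h
      · exact vH_ne_vF4 d 7 h
      · exact vH_ne_vF3 d 7 h
      · exact vH_ne d (i := 7) (j := 8) (by omega) (by omega) h
      · exact vH_ne d (i := 7) (j := 9) (by omega) (by omega) h
    · -- vF2 not in rest
      simp only [List.mem_cons, List.mem_append, hmem, List.mem_singleton, List.not_mem_nil, or_false]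
      rintro (h | ⟨j, hj, h⟩ | h | h | h | h)
      · exact vF1_ne_vF2 d h.symm
      · exact vH_ne_vF2 d (10 + j) h.symm
      · exact vF2_ne_vF4 d h
      · exact vF2_ne_vF3 d h
      · exact vH_ne_vF2 d 8 h.symm
      · exact vH_ne_vF2 d 9 h.symm
    · -- vF1 not in rest
      simp only [List.mem_append, hmem, List.mem_cons, List.mem_singleton, List.not_mem_nil, or_false]
      rintro (⟨j, hj, h⟩ | h | h | h | h)
      · exact vH_ne_vF1 d (10 + j) h.symm
      · exact vF1_ne_vF4 d h
      · exact vF1_ne_vF3 d h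
      · exact vH_ne_vF1 d 8 h.symm
      · exact vH_ne_vF1 d 9 h.symm
    · -- tail nodup
      refine List.nodup_cons.mpr ⟨?_, List.nodup_cons.mpr ⟨?_,
        List.nodup_cons.mpr ⟨?_, List.nodup_singleton _⟩⟩⟩
      · simp only [List.mem_cons, List.mem_singleton, List.not_mem_nil, or_false, false_or]
        rintro (h | h | h)
        · exact vF3_ne_vF4 d h.symm
        · exact vH_ne_vF4 d 8 h.symm
        · exact vH_ne_vF4 d 9 h.symm
      · simp only [List.mem_cons, List.mem_singleton, List.not_mem_nil, or_false, false_or]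
        rintro (h | h)
        · exact vH_ne_vF3 d 8 h.symm
        · exact vH_ne_vF3 d 9 h.symm
      · simp only [List.mem_cons, List.mem_singleton, List.not_mem_nil, or_false, false_or]
        intro h
        exact vH_ne d (i := 8) (j := 9) (by omega) (by omega) h
    · -- disjointness of chain support and tail
      intro w hw hw'
      obtain ⟨j, hj, rfl⟩ := (hmem w).mp hw
      simp only [List.mem_cons, List.mem_singleton, List.not_mem_nil, or_false] at hw'
      rcases hw' with h | h | h | h
      · exact vH_ne_vF4 d (10 + j) h
      · exact vH_ne_vF3 d (10 + j) h
      · exact vH_ne d (i := 8) (j := 10 + j) (by omega) (by omega) h.symm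
      · exact vH_ne d (i := 9) (j := 10 + j) (by omega) (by omega) h.symm
  have hmm : v ∈ (vH d 6 :: vH d 7 :: vF2 d :: vF1 d ::
      ((chainW d (d + 7)).support ++ [vF4 d, vF3 d, vH d 8, vH d 9])) := by
    simp only [List.mem_cons, List.mem_append, chain_mem d (d + 7), List.mem_singleton, or_false,
      List.not_mem_nil, or_false]
    have hv : (v : Finset ℕ) ∈ (Finset.Icc 1 (d + 12)).image (Hface d) ∪
        ({Fone d, Ftwo d, Fthree d, Ffour d} : Finset (Finset ℕ)) := v.2
    rcases Finset.mem_union.mp hv with hv | hv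
    · obtain ⟨i, hi, he⟩ := Finset.mem_image.mp hv
      rw [Finset.mem_Icc] at hi
      have hcase : i ≤ 5 ∨ i = 6 ∨ i = 7 ∨ i = 8 ∨ i = 9 ∨ (10 ≤ i ∧ i ≤ d + 12) := by omega
      rcases hcase with h | rfl | rfl | rfl | rfl | ⟨h1, h2⟩
      · -- i ≤ 5 : use chain index i + d + 2 since 10 + (i+d+2) ≡ i
        refine Or.inr (Or.inr (Or.inr (Or.inr (Or.inl ⟨i + d + 2, by omega, ?_⟩))))
        refine Subtype.ext ?_
        show v.1 = Hface d (10 + (i + d + 2))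
        have hc : Hface d (10 + (i + d + 2)) = Hface d i := by
          refine Hface_congr d ((ZMod.natCast_eq_natCast_iff _ _ _).mpr ?_)
          show (10 + (i + d + 2)) % (d + 12) = i % (d + 12)
          rw [show 10 + (i + d + 2) = i + (d + 12) from by omega, Nat.add_mod_right]
        rw [hc, he]
      · exact Or.inl (Subtype.ext he.symm)
      · exact Or.inr (Or.inl (Subtype.ext he.symm))
      · exact Or.inr (Or.inr (Or.inr (Or.inr (Or.inr (Or.inr (Or.inr (Or.inl
          (Subtype.ext he.symm))))))))
      · exact Or.inr (Or.inr (Or.inr (Or.inr (Or.inr (Or.inr (Or.inr (Or.inr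
          (Subtype.ext he.symm))))))))
      · refine Or.inr (Or.inr (Or.inr (Or.inr (Or.inl ⟨i - 10, by omega, ?_⟩))))
        refine Subtype.ext ?_
        show v.1 = Hface d (10 + (i - 10))
        rw [show 10 + (i - 10) = i from by omega, he]
    · simp only [Finset.mem_insert, Finset.mem_singleton] at hv
      rcases hv with h | h | h | h
      · exact Or.inr (Or.inr (Or.inr (Or.inl (Subtype.ext h))))
      · exact Or.inr (Or.inr (Or.inl (Subtype.ext h)))
      · exact Or.inr (Or.inr (Or.inr (Or.inr (Or.inr (Or.inr (Or.inl (Subtype.ext h)))))))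
      · exact Or.inr (Or.inr (Or.inr (Or.inr (Or.inr (Or.inl (Subtype.ext h))))))
  exact @List.count_eq_one_of_mem _ instBEqOfDecidableEq _ _ _ hnd hmm
end

section
/- The complex K is 2-strongly connected: K is strongly connected, and for every vertex v of K, the pure 2-complex whose facets are the facets of K not containing v is strongly connected. -/
/-- The facets of the 2-complex `K` on vertex set `{1,...,13}`. -/
def facetsK : Finset (Finset ℕ) :=
  {{2, 4, 12}, {1, 2, 4}, {1, 2, 12}, {1, 4, 12}, {2, 4, 13}, {2, 3, 13}, {3, 12, 13},
   {2, 3, 12}, {4, 5, 9}, {4, 9, 13}, {9, 10, 13}, {10, 12, 13}, {10, 11, 12},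
   {4, 11, 12}, {4, 5, 11}, {5, 6, 9}, {6, 7, 9}, {7, 8, 10}, {7, 8, 11}, {5, 6, 7},
   {5, 7, 11}, {7, 9, 10}, {8, 10, 11}}

/-- The dual graph of a pure `d`-complex given by its facet set `Fs`: vertices are the
facets, two facets being adjacent iff their intersection has exactly `d` elements. -/
def dualGraph (d : ℕ) (Fs : Finset (Finset ℕ)) : SimpleGraph {F : Finset ℕ // F ∈ Fs} where
  Adj A B := A ≠ B ∧ ((A : Finset ℕ) ∩ (B : Finset ℕ)).card = d
  symm := by
    constructor
    intro A B h
    exact ⟨h.1.symm, by rw [Finset.inter_comm]; exact h.2⟩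
  loopless := by
    constructor
    intro A h
    exact h.1 rfl

instance instAdjDec (d : ℕ) (Fs : Finset (Finset ℕ)) : DecidableRel (dualGraph d Fs).Adj :=
  fun A B => inferInstanceAs (Decidable (A ≠ B ∧ ((A : Finset ℕ) ∩ (B : Finset ℕ)).card = d))

/-- One BFS expansion step. -/
def stepSet {V : Type*} [Fintype V] [DecidableEq V] (G : SimpleGraph V) [DecidableRel G.Adj]
    (s : Finset V) : Finset V :=
  s ∪ Finset.univ.filter (fun v => ∃ u ∈ s, G.Adj u v)

lemma reach_of_mem_iter {V : Type*} [Fintype V] [DecidableEq V] (G : SimpleGraph V)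
    [DecidableRel G.Adj] (root : V) :
    ∀ n v, v ∈ (stepSet G)^[n] {root} → G.Reachable root v := by
  intro n
  induction n with
  | zero =>
    intro v hv
    simp only [Function.iterate_zero_apply, Finset.mem_singleton] at hv
    subst hv; exact SimpleGraph.Reachable.refl _
  | succ n ih =>
    intro v hv
    rw [Function.iterate_succ_apply'] at hv
    rcases Finset.mem_union.1 hv with h | h
    · exact ih v h
    · obtain ⟨u, hu, hadj⟩ := (Finset.mem_filter.1 h).2
      exact (ih u hu).trans hadj.reachable

lemma connected_of_iter {V : Type*} [Fintype V] [DecidableEq V] (G : SimpleGraph V)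
    [DecidableRel G.Adj] (root : V) (n : ℕ)
    (h : (stepSet G)^[n] {root} = Finset.univ) : G.Connected := by
  have hr : ∀ v, G.Reachable root v := fun v =>
    reach_of_mem_iter G root n v (h ▸ Finset.mem_univ v)
  have : Nonempty V := ⟨root⟩
  exact ⟨fun u v => (hr u).symm.trans (hr v)⟩

set_option maxHeartbeats 2000000 in
/-- The complex `K` is 2-strongly connected: `K` is strongly connected (its dual graph is
connected), and for every vertex `v` of `K`, the pure 2-complex whose facets are the
facets of `K` not containing `v` is strongly connected. -/
theorem K_two_strongly_connected :
    (dualGraph 2 facetsK).Connected ∧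
    ∀ v ∈ Finset.Icc 1 13,
      (dualGraph 2 (facetsK.filter (fun F => v ∉ F))).Connected := by
  constructor
  · exact connected_of_iter _ ⟨{2,4,12}, by decide⟩ 23 (by decide)
  · intro v hv
    rw [Finset.mem_Icc] at hv
    obtain ⟨h1, h2⟩ := hv
    interval_cases v <;>
      first
        | exact connected_of_iter _ ⟨{2,4,12}, by decide⟩ 23 (by decide)
        | exact connected_of_iter _ ⟨{7,8,10}, by decide⟩ 23 (by decide)
end
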